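/- arXiv:2401.08084 — 6 statements merged into one kernel-verified Lean document; each statement's English description precedes it below -/
import Mathlib

section
/- Let 0≤C<1 and let h, J be continuous on [0,∞) with h(ρ)→1 as ρ→∞ and J(ρ)²/ρ²→C² as ρ→∞. Let F be a twice differentiable function on (ρ₀,∞) with 0<F(ρ)≤1, F(ρ)→0 as ρ→∞, solving ρ²F''(ρ)=(F(ρ)²−1)F(ρ)−(J(ρ)²−ρ²h(ρ)²)F(ρ). Then for every ε with 0<ε<√(1−C²) there is a constant C_ε>0 such that 0<F(ρ)≤C_ε e^{−(√(1−C²)−ε)ρ} for all sufficiently large ρ. -/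
open Real Set Filter Topology

set_option maxHeartbeats 800000

/-- Exponential decay of the `F`-component at infinity:
`F(ρ) = O(e^{-(√(1-C²)-ε)ρ})` as `ρ → ∞`. -/
theorem F_exponential_decay
    (C ρ₀ : ℝ) (hC0 : 0 ≤ C) (hC1 : C < 1) (h J F : ℝ → ℝ)
    (hhcont : ContinuousOn h (Ici 0)) (hJcont : ContinuousOn J (Ici 0))
    (hhlim : Tendsto h atTop (𝓝 1))
    (hJlim : Tendsto (fun ρ => J ρ ^ 2 / ρ ^ 2) atTop (𝓝 (C ^ 2)))
    (hFdiff : ∀ ρ ∈ Ioi ρ₀, DifferentiableAt ℝ F ρ ∧ DifferentiableAt ℝ (deriv F) ρ)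
    (hFrange : ∀ ρ ∈ Ioi ρ₀, 0 < F ρ ∧ F ρ ≤ 1)
    (hFlim : Tendsto F atTop (𝓝 0))
    (hFode : ∀ ρ ∈ Ioi ρ₀, ρ ^ 2 * deriv (deriv F) ρ
      = (F ρ ^ 2 - 1) * F ρ - (J ρ ^ 2 - ρ ^ 2 * h ρ ^ 2) * F ρ) :
    ∀ ε : ℝ, 0 < ε → ε < Real.sqrt (1 - C ^ 2) →
      ∃ Cε : ℝ, 0 < Cε ∧ ∃ R : ℝ, ∀ ρ ≥ R,
        0 < F ρ ∧ F ρ ≤ Cε * exp (-(Real.sqrt (1 - C ^ 2) - ε) * ρ) := by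
  intro ε hε hεs
  have hC2 : C ^ 2 < 1 := by nlinarith
  set s := Real.sqrt (1 - C ^ 2) with hs_def
  have hs2 : s ^ 2 = 1 - C ^ 2 := Real.sq_sqrt (by linarith)
  set μ := s - ε with hμ_def
  have hμpos : 0 < μ := by simp only [hμ_def]; linarith
  have hμ2 : μ ^ 2 < 1 - C ^ 2 := by nlinarith
  -- eventual lower bound on the coefficient
  have h2 : Tendsto (fun ρ : ℝ => 1 / ρ ^ 2) atTop (𝓝 0) := by
    have hp : Tendsto (fun ρ : ℝ => ρ ^ 2) atTop atTop := tendsto_pow_atTop two_ne_zero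
    simpa [one_div, Pi.inv_def] using hp.inv_tendsto_atTop
  have hφlim : Tendsto (fun ρ => h ρ ^ 2 - J ρ ^ 2 / ρ ^ 2 - 1 / ρ ^ 2)
      atTop (𝓝 (1 - C ^ 2)) := by
    have h1 : Tendsto (fun ρ => h ρ ^ 2) atTop (𝓝 1) := by
      simpa using hhlim.pow 2
    simpa using (h1.sub hJlim).sub h2
  have hev := hφlim.eventually_const_le hμ2
  rw [eventually_atTop] at hev
  obtain ⟨R₀, hR₀⟩ := hev
  set R₁ : ℝ := max R₀ (max (ρ₀ + 1) 1) with hR₁def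
  have hR₁ρ₀ : ρ₀ < R₁ := lt_of_lt_of_le (by linarith) ((le_max_left _ _).trans (le_max_right _ _))
  have hR₁pos : (0:ℝ) < R₁ := lt_of_lt_of_le one_pos ((le_max_right _ _).trans (le_max_right _ _))
  -- key differential inequality F'' ≥ μ² F on [R₁, ∞)
  have key : ∀ ρ, R₁ ≤ ρ → μ ^ 2 * F ρ ≤ deriv (deriv F) ρ := by
    intro ρ hρ
    have hρ0 : ρ ∈ Ioi ρ₀ := lt_of_lt_of_le hR₁ρ₀ hρ
    have hρpos : 0 < ρ := lt_of_lt_of_le hR₁pos hρ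
    have hρ2 : (0:ℝ) < ρ ^ 2 := by positivity
    have hode := hFode ρ hρ0
    have hF := hFrange ρ hρ0
    have hb := hR₀ ρ ((le_max_left _ _).trans hρ)
    have hb' : μ ^ 2 * ρ ^ 2 ≤ ρ ^ 2 * h ρ ^ 2 - J ρ ^ 2 - 1 := by
      have h1 : (h ρ ^ 2 - J ρ ^ 2 / ρ ^ 2 - 1 / ρ ^ 2) * ρ ^ 2
          = ρ ^ 2 * h ρ ^ 2 - J ρ ^ 2 - 1 := by field_simp
      have h2' := mul_le_mul_of_nonneg_right hb hρ2.le
      rw [h1] at h2'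
      linarith
    have hm : μ ^ 2 * F ρ * ρ ^ 2 ≤ deriv (deriv F) ρ * ρ ^ 2 := by
      nlinarith [mul_le_mul_of_nonneg_left hb' hF.1.le, pow_nonneg hF.1.le 3,
        mul_pos hF.1 hρ2]
    exact le_of_mul_le_mul_right hm hρ2
  -- the comparison function
  set K : ℝ := F R₁ * Real.exp (μ * R₁) with hKdef
  have hFR₁pos : 0 < F R₁ := (hFrange R₁ hR₁ρ₀).1
  have hKpos : 0 < K := mul_pos hFR₁pos (exp_pos _)
  set g : ℝ → ℝ := fun x => K * Real.exp (-μ * x) with hgdef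
  set g' : ℝ → ℝ := fun x => -μ * (K * Real.exp (-μ * x)) with hg'def
  have hlin : ∀ x : ℝ, HasDerivAt (fun x : ℝ => -μ * x) (-μ) x := by
    intro x; simpa using (hasDerivAt_id x).const_mul (-μ)
  have hg : ∀ x, HasDerivAt g (g' x) x := by
    intro x
    have := ((hlin x).exp).const_mul K
    refine this.congr_deriv ?_
    simp only [hg'def]; ring
  have hg' : ∀ x, HasDerivAt g' (μ ^ 2 * g x) x := by
    intro x
    have := (((hlin x).exp).const_mul K).const_mul (-μ)
    refine this.congr_deriv ?_
    simp only [hgdef]; ring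
  set w : ℝ → ℝ := fun x => F x - g x with hwdef
  have hwdiff : ∀ ρ ∈ Ioi ρ₀, HasDerivAt w (deriv F ρ - g' ρ) ρ := fun ρ hρ =>
    ((hFdiff ρ hρ).1.hasDerivAt).sub (hg ρ)
  have hwderiv : ∀ ρ ∈ Ioi ρ₀, deriv w ρ = deriv F ρ - g' ρ := fun ρ hρ =>
    (hwdiff ρ hρ).deriv
  have hwcont : ∀ ρ ∈ Ioi ρ₀, ContinuousAt w ρ := fun ρ hρ =>
    (hwdiff ρ hρ).differentiableAt.continuousAt
  have hw2 : ∀ ρ ∈ Ioi ρ₀, deriv (deriv w) ρ = deriv (deriv F) ρ - μ ^ 2 * g ρ := by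
    intro ρ hρ
    have hevd : deriv w =ᶠ[𝓝 ρ] fun x => deriv F x - g' x := by
      filter_upwards [Ioi_mem_nhds hρ] with x hx
      exact hwderiv x hx
    rw [hevd.deriv_eq]
    exact (((hFdiff ρ hρ).2.hasDerivAt).sub (hg' ρ)).deriv
  have hw'' : ∀ ρ, R₁ ≤ ρ → μ ^ 2 * w ρ ≤ deriv (deriv w) ρ := by
    intro ρ hρ
    have hρ0 : ρ ∈ Ioi ρ₀ := lt_of_lt_of_le hR₁ρ₀ hρ
    rw [hw2 ρ hρ0]
    have h1 : μ ^ 2 * w ρ = μ ^ 2 * F ρ - μ ^ 2 * g ρ := by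
      simp only [hwdef]; ring
    linarith [key ρ hρ]
  -- w R₁ = 0 and w → 0
  have hwR₁ : w R₁ = 0 := by
    have hmul : Real.exp (μ * R₁) * Real.exp (-μ * R₁) = 1 := by
      rw [← Real.exp_add]
      have : μ * R₁ + -μ * R₁ = 0 := by ring
      rw [this, Real.exp_zero]
    simp only [hwdef, hgdef, hKdef]
    rw [mul_assoc, hmul, mul_one, sub_self]
  have hgtends : Tendsto g atTop (𝓝 0) := by
    have h1 : Tendsto (fun x : ℝ => -μ * x) atTop atBot :=
      (tendsto_const_mul_atBot_of_neg (by linarith : -μ < 0)).mpr tendsto_id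
    have h2 := Real.tendsto_exp_atBot.comp h1
    simpa [hgdef] using h2.const_mul K
  have hwtends : Tendsto w atTop (𝓝 0) := by
    simpa [hwdef] using hFlim.sub hgtends
  -- comparison: w ≤ 0 on [R₁, ∞)
  have hwle : ∀ ρ, R₁ ≤ ρ → w ρ ≤ 0 := by
    by_contra hcon
    push_neg at hcon
    obtain ⟨x0, hx0R, hx0⟩ := hcon
    have hB := hwtends.eventually_lt_const hx0
    rw [eventually_atTop] at hB
    obtain ⟨B₀, hB₀⟩ := hB
    set B : ℝ := max B₀ x0 with hBdef
    have hcompact : IsCompact (Icc R₁ B) := isCompact_Icc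
    have hcontOn : ContinuousOn w (Icc R₁ B) := fun x hx =>
      (hwcont x (lt_of_lt_of_le hR₁ρ₀ hx.1)).continuousWithinAt
    have hne : (Icc R₁ B).Nonempty := ⟨x0, hx0R, le_max_right _ _⟩
    obtain ⟨z, hzmem, hmax⟩ := hcompact.exists_isMaxOn hne hcontOn
    have hx0z : w x0 ≤ w z := hmax ⟨hx0R, le_max_right _ _⟩
    have hzpos : 0 < w z := lt_of_lt_of_le hx0 hx0z
    have hglobal : ∀ y, R₁ ≤ y → w y ≤ w z := by
      intro y hy
      by_cases hyB : y ≤ B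
      · exact hmax ⟨hy, hyB⟩
      · push_neg at hyB
        have : B₀ ≤ y := (le_max_left _ _).trans hyB.le
        exact (hB₀ y this).le.trans hx0z
    have hzR₁ : R₁ < z := by
      rcases lt_or_eq_of_le hzmem.1 with hlt | heq
      · exact hlt
      · exfalso; rw [← heq, hwR₁] at hzpos; exact lt_irrefl 0 hzpos
    -- neighborhood where w > 0 and staying in (R₁, ∞)
    have hevpos : ∀ᶠ x in 𝓝 z, 0 < w x ∧ R₁ < x := by
      have h1 : ∀ᶠ x in 𝓝 z, 0 < w x :=
        (hwcont z (lt_of_lt_of_le hR₁ρ₀ hzR₁.le)).eventually (eventually_gt_nhds hzpos)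
      exact h1.and (eventually_gt_nhds hzR₁)
    rw [Metric.eventually_nhds_iff] at hevpos
    obtain ⟨δ, hδpos, hδ⟩ := hevpos
    set a : ℝ := z - δ / 2 with hadef
    set b : ℝ := z + δ / 2 with hbdef
    have hmem : ∀ x ∈ Icc a b, 0 < w x ∧ R₁ < x := by
      intro x hx
      rw [mem_Icc, hadef, hbdef] at hx
      obtain ⟨hx1, hx2⟩ := hx
      apply hδ
      rw [Real.dist_eq, abs_lt]
      constructor <;> linarith
    have hconv : StrictConvexOn ℝ (Icc a b) w := by
      apply strictConvexOn_of_deriv2_pos (convex_Icc a b)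
      · intro x hx
        exact (hwcont x (lt_of_lt_of_le hR₁ρ₀ (hmem x hx).2.le)).continuousWithinAt
      · intro x hx
        rw [interior_Icc] at hx
        have hx' := hmem x ⟨hx.1.le, hx.2.le⟩
        have := hw'' x hx'.2.le
        have hpos : 0 < μ ^ 2 * w x := mul_pos (pow_pos hμpos 2) hx'.1
        simp only [Function.iterate_succ, Function.iterate_zero, Function.comp_apply, id_eq]
        linarith
    have hab : a ≠ b := by simp only [hadef, hbdef]; intro hc; nlinarith
    have hmid := hconv.2 (x := a) (y := b) ⟨le_refl a, by simp only [hadef, hbdef]; linarith⟩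
      ⟨by simp only [hadef, hbdef]; linarith, le_refl b⟩ hab
      (by norm_num : (0:ℝ) < 1/2) (by norm_num : (0:ℝ) < 1/2) (by norm_num)
    have hzeq : (1/2 : ℝ) • a + (1/2 : ℝ) • b = z := by
      simp only [smul_eq_mul, hadef, hbdef]; ring
    rw [hzeq] at hmid
    have hwa : w a ≤ w z := hglobal a (hmem a ⟨le_refl a, by simp only [hadef, hbdef]; linarith⟩).2.le
    have hwb : w b ≤ w z := hglobal b (hmem b ⟨by simp only [hadef, hbdef]; linarith, le_refl b⟩).2.le
    simp only [smul_eq_mul, hwdef, hgdef] at hmid hwa hwb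
    linarith
  -- conclusion
  refine ⟨K, hKpos, R₁, fun ρ hρ => ?_⟩
  have hρ0 : ρ ∈ Ioi ρ₀ := lt_of_lt_of_le hR₁ρ₀ hρ
  refine ⟨(hFrange ρ hρ0).1, ?_⟩
  have := hwle ρ hρ
  simp only [hwdef, hgdef, sub_nonpos] at this
  simpa using this
end

section
/- Under the standing hypotheses on (J,h), the boundary value problem for the F-equation has at most one solution: if F₁ and F₂ are both continuously differentiable on [0,∞), twice differentiable on (0,∞), solve ρ²F''=(F²−1)F−(J²−ρ²h²)F on (0,∞), satisfy F₁(0)=F₂(0)=1, F₁(∞)=F₂(∞)=0, and F₁(ρ)≠0, F₂(ρ)≠0 for all ρ∈[0,∞), then F₁=F₂. -/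
open Real Set Filter Topology

lemma aux_pos (F : ℝ → ℝ) (hc : ContinuousOn F (Ici 0))
    (h0 : F 0 = 1) (hne : ∀ ρ ∈ Ici (0:ℝ), F ρ ≠ 0) :
    ∀ ρ ∈ Ici (0:ℝ), 0 < F ρ := by
  intro ρ hρ
  by_contra hle
  push_neg at hle
  have hlt : F ρ < 0 := lt_of_le_of_ne hle (hne ρ hρ)
  have hsub : Icc (F ρ) (F 0) ⊆ F '' Icc 0 ρ :=
    intermediate_value_Icc' hρ (hc.mono Icc_subset_Ici_self)
  have h0m : (0:ℝ) ∈ Icc (F ρ) (F 0) := by rw [h0]; exact ⟨hlt.le, zero_le_one⟩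
  obtain ⟨c, hc1, hc2⟩ := hsub h0m
  exact hne c hc1.1 hc2

lemma aux_decay (F : ℝ → ℝ) (R' : ℝ) (hR' : 0 < R')
    (hder : ∀ ρ ∈ Ici R', HasDerivAt F (deriv F ρ) ρ)
    (hmono : MonotoneOn (deriv F) (Ici R'))
    (hpos : ∀ ρ ∈ Ici R', 0 < F ρ)
    (hlim : Tendsto F atTop (𝓝 0)) :
    Tendsto (deriv F) atTop (𝓝 0) := by
  have hcont : ∀ s t : ℝ, R' ≤ s → ContinuousOn F (Icc s t) := by
    intro s t hs
    intro y hy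
    exact ((hder y (le_trans hs hy.1)).continuousAt).continuousWithinAt
  have hmvt : ∀ s t : ℝ, R' ≤ s → s < t →
      ∃ ξ ∈ Ioo s t, deriv F ξ = (F t - F s) / (t - s) := by
    intro s t hs hst
    exact exists_hasDerivAt_eq_slope F (deriv F) hst (hcont s t hs)
      (fun y hy => hder y (le_trans hs (le_of_lt hy.1)))
  -- deriv F ≤ 0 on Ici R'
  have hle : ∀ s, R' ≤ s → deriv F s ≤ 0 := by
    intro s hs
    by_contra hp
    push_neg at hp
    have h1 : ∀ᶠ t in atTop, F t < F s := hlim.eventually_lt_const (hpos s hs)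
    have h2 : ∀ᶠ t in atTop, s + 1 ≤ t := eventually_ge_atTop (s+1)
    obtain ⟨t, ht1, ht2⟩ := (h1.and h2).exists
    have hst : s < t := by linarith
    obtain ⟨ξ, hξ, hξ2⟩ := hmvt s t hs hst
    have : deriv F s ≤ deriv F ξ := hmono hs (le_trans hs hξ.1.le) hξ.1.le
    have hneg : (F t - F s) / (t - s) < 0 :=
      div_neg_of_neg_of_pos (by linarith) (by linarith)
    linarith [hξ2 ▸ this]
  set g : ℝ → ℝ := fun ρ => deriv F (max ρ R') with hg
  have hgmono : Monotone g := fun a b hab =>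
    hmono (le_max_right a R') (le_max_right b R') (max_le_max hab le_rfl)
  have hgbdd : BddAbove (range g) := by
    refine ⟨0, ?_⟩
    rintro _ ⟨ρ, rfl⟩
    exact hle _ (le_max_right _ _)
  have htend := tendsto_atTop_ciSup hgmono hgbdd
  set L := ⨆ ρ, g ρ with hL
  have hL0 : L ≤ 0 := ciSup_le (fun ρ => hle _ (le_max_right _ _))
  have hLge : 0 ≤ L := by
    by_contra hneg
    push_neg at hneg
    set t := R' + (F R' + 1) / (-L) with ht
    have hFR : 0 < F R' := hpos R' self_mem_Ici
    have hfrac : 0 < (F R' + 1) / (-L) := div_pos (by linarith) (by linarith)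
    have htR : R' < t := by simp [ht]; linarith
    obtain ⟨ξ, hξ, hξ2⟩ := hmvt R' t le_rfl htR
    have hdle : deriv F ξ ≤ L := by
      have := le_ciSup hgbdd ξ
      rwa [show g ξ = deriv F ξ by simp [hg, max_eq_left (le_trans le_rfl hξ.1.le)]] at this
    have hd : t - R' = (F R' + 1) / (-L) := by simp [ht]
    have hdpos : 0 < t - R' := by linarith
    have hLne : L ≠ 0 := ne_of_lt hneg
    have hmul : (t - R') * (-L) = F R' + 1 := by
      rw [hd]; field_simp
    have hFt : 0 < F t := hpos t htR.le
    have : F t - F R' = deriv F ξ * (t - R') := by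
      rw [hξ2]; field_simp
    nlinarith [this, hdle, hdpos, hmul]
  have hLeq : L = 0 := le_antisymm hL0 hLge
  rw [hLeq] at htend
  refine htend.congr' ?_
  filter_upwards [eventually_ge_atTop R'] with ρ hρ
  simp [hg, max_eq_left hρ]

lemma aux_key (J h : ℝ → ℝ) (R : ℝ)
    (hV : ∀ ρ, R ≤ ρ → 1 < ρ ^ 2 * h ρ ^ 2 - J ρ ^ 2)
    (F₁ F₂ : ℝ → ℝ)
    (hF₁C1 : ContDiffOn ℝ 1 F₁ (Ici 0)) (hF₂C1 : ContDiffOn ℝ 1 F₂ (Ici 0))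
    (hF₁diff : ∀ ρ ∈ Ioi (0:ℝ), DifferentiableAt ℝ F₁ ρ ∧ DifferentiableAt ℝ (deriv F₁) ρ)
    (hF₂diff : ∀ ρ ∈ Ioi (0:ℝ), DifferentiableAt ℝ F₂ ρ ∧ DifferentiableAt ℝ (deriv F₂) ρ)
    (hF₁ode : ∀ ρ ∈ Ioi (0:ℝ), ρ ^ 2 * deriv (deriv F₁) ρ
      = (F₁ ρ ^ 2 - 1) * F₁ ρ - (J ρ ^ 2 - ρ ^ 2 * h ρ ^ 2) * F₁ ρ)
    (hF₂ode : ∀ ρ ∈ Ioi (0:ℝ), ρ ^ 2 * deriv (deriv F₂) ρ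
      = (F₂ ρ ^ 2 - 1) * F₂ ρ - (J ρ ^ 2 - ρ ^ 2 * h ρ ^ 2) * F₂ ρ)
    (hF₁0 : F₁ 0 = 1) (hF₂0 : F₂ 0 = 1)
    (hF₁lim : Tendsto F₁ atTop (𝓝 0)) (hF₂lim : Tendsto F₂ atTop (𝓝 0))
    (hF₁pos : ∀ ρ ∈ Ici (0:ℝ), 0 < F₁ ρ) (hF₂pos : ∀ ρ ∈ Ici (0:ℝ), 0 < F₂ ρ)
    (x : ℝ) (hx : 0 < x) (hlt : F₂ x < F₁ x) : False := by
  set u : ℝ → ℝ := fun ρ => F₁ ρ - F₂ ρ with hu_def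
  have hu_cont : ContinuousOn u (Ici 0) := (hF₁C1.continuousOn).sub (hF₂C1.continuousOn)
  have hd1 : ∀ ρ : ℝ, 0 < ρ → HasDerivAt F₁ (deriv F₁ ρ) ρ :=
    fun ρ hρ => ((hF₁diff ρ (mem_Ioi.mpr hρ)).1).hasDerivAt
  have hd2 : ∀ ρ : ℝ, 0 < ρ → HasDerivAt F₂ (deriv F₂ ρ) ρ :=
    fun ρ hρ => ((hF₂diff ρ (mem_Ioi.mpr hρ)).1).hasDerivAt
  have hd1' : ∀ ρ : ℝ, 0 < ρ → HasDerivAt (deriv F₁) (deriv (deriv F₁) ρ) ρ :=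
    fun ρ hρ => ((hF₁diff ρ (mem_Ioi.mpr hρ)).2).hasDerivAt
  have hd2' : ∀ ρ : ℝ, 0 < ρ → HasDerivAt (deriv F₂) (deriv (deriv F₂) ρ) ρ :=
    fun ρ hρ => ((hF₂diff ρ (mem_Ioi.mpr hρ)).2).hasDerivAt
  set W : ℝ → ℝ := fun ρ => deriv F₁ ρ * F₂ ρ - deriv F₂ ρ * F₁ ρ with hW_def
  have hW : ∀ ρ : ℝ, 0 < ρ →
      HasDerivAt W ((F₁ ρ ^ 2 - F₂ ρ ^ 2) * (F₁ ρ * F₂ ρ) / ρ ^ 2) ρ := by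
    intro ρ hρ
    have hρne : ρ ≠ 0 := ne_of_gt hρ
    have e1 := hF₁ode ρ (mem_Ioi.mpr hρ)
    have e2 := hF₂ode ρ (mem_Ioi.mpr hρ)
    have hder := ((hd1' ρ hρ).mul (hd2 ρ hρ)).sub ((hd2' ρ hρ).mul (hd1 ρ hρ))
    convert hder using 1
    · rfl
    · rfl
    · rfl
    field_simp
    linear_combination F₁ ρ * e2 - F₂ ρ * e1
  have hWmono : ∀ c d : ℝ, 0 < c → c < d →
      (∀ s, c ≤ s → s ≤ d → F₂ s < F₁ s) → W c < W d := by
    intro c d hc hcd hpos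
    have hsm : StrictMonoOn W (Icc c d) := by
      apply strictMonoOn_of_deriv_pos (convex_Icc c d)
      · intro s hs
        exact ((hW s (lt_of_lt_of_le hc hs.1)).continuousAt).continuousWithinAt
      · intro s hs
        rw [interior_Icc] at hs
        have hs0 : 0 < s := lt_trans hc hs.1
        have hF2s : 0 < F₂ s := hF₂pos s (mem_Ici.mpr hs0.le)
        have hlt' : F₂ s < F₁ s := hpos s hs.1.le hs.2.le
        rw [(hW s hs0).deriv]
        have h1 : 0 < F₁ s ^ 2 - F₂ s ^ 2 := by nlinarith
        have h2 : 0 < F₁ s * F₂ s := mul_pos (lt_trans hF2s hlt') hF2s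
        positivity
    exact hsm (left_mem_Icc.mpr hcd.le) (right_mem_Icc.mpr hcd.le) hcd
  -- the contact point a below x
  set S : Set ℝ := Icc 0 x ∩ u ⁻¹' {0} with hS_def
  have hSclosed : IsClosed S :=
    (hu_cont.mono Icc_subset_Ici_self).preimage_isClosed_of_isClosed isClosed_Icc
      isClosed_singleton
  have hScompact : IsCompact S :=
    isCompact_Icc.of_isClosed_subset hSclosed inter_subset_left
  have hSne : S.Nonempty := ⟨0, ⟨le_rfl, hx.le⟩, by simp [hu_def, hF₁0, hF₂0]⟩
  set a := sSup S with ha_def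
  have haS : a ∈ S := hScompact.sSup_mem hSne
  have haub : ∀ s ∈ S, s ≤ a := fun s hs => le_csSup hScompact.bddAbove hs
  have ha0 : 0 ≤ a := haS.1.1
  have hua : u a = 0 := haS.2
  have hux : 0 < u x := sub_pos.mpr hlt
  have hax : a < x := lt_of_le_of_ne haS.1.2 (fun e => by rw [e] at hua; linarith)
  have hu_ax : ∀ ρ, a < ρ → ρ ≤ x → 0 < u ρ := by
    intro ρ h1 h2
    have hρ0 : 0 ≤ ρ := le_trans ha0 h1.le
    rcases lt_trichotomy (u ρ) 0 with hneg | hzero | hpos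
    · have hsub : Icc (u ρ) (u x) ⊆ u '' Icc ρ x :=
        intermediate_value_Icc h2 (hu_cont.mono (fun s hs => mem_Ici.mpr (le_trans hρ0 hs.1)))
      obtain ⟨s, hs1, hs2⟩ := hsub ⟨hneg.le, hux.le⟩
      have : s ≤ a := haub s ⟨⟨le_trans hρ0 hs1.1, hs1.2⟩, mem_singleton_iff.mpr hs2⟩
      linarith [hs1.1]
    · exact absurd (haub ρ ⟨⟨hρ0, h2⟩, hzero⟩) (not_le.mpr h1)
    · exact hpos
  -- find a point ρ₁ ∈ (a,x) where W > 0
  have hIax : Icc a x ⊆ Ici (0:ℝ) := fun s hs => mem_Ici.mpr (le_trans ha0 hs.1)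
  have hρ₁ : ∃ ρ₁, a < ρ₁ ∧ ρ₁ < x ∧ 0 < W ρ₁ := by
    by_contra hcon
    push_neg at hcon
    set g : ℝ → ℝ := fun ρ => u ρ / F₂ ρ with hg_def
    have hgcont : ContinuousOn g (Icc a x) :=
      (hu_cont.mono hIax).div ((hF₂C1.continuousOn).mono hIax)
        (fun s hs => ne_of_gt (hF₂pos s (hIax hs)))
    have hgder : ∀ s ∈ Ioo a x, HasDerivAt g (W s / F₂ s ^ 2) s := by
      intro s hs
      have hs0 : 0 < s := lt_of_le_of_lt ha0 hs.1
      have hF2ne : F₂ s ≠ 0 := ne_of_gt (hF₂pos s (mem_Ici.mpr hs0.le))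
      have hder := (((hd1 s hs0).sub (hd2 s hs0)).div (hd2 s hs0) hF2ne)
      convert hder using 1
      · rfl
      · rfl
      · rfl
      simp only [hW_def, hu_def, Pi.sub_apply]
      ring
    obtain ⟨ξ, hξ, hξ2⟩ := exists_hasDerivAt_eq_slope g (fun s => W s / F₂ s ^ 2) hax
      hgcont hgder
    have hga : g a = 0 := by simp [hg_def, hua]
    have hgx : 0 < g x := div_pos hux (hF₂pos x (mem_Ici.mpr hx.le))
    have hslope : 0 < (g x - g a) / (x - a) := by
      apply div_pos _ (sub_pos.mpr hax); rw [hga]; linarith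
    have hle : W ξ / F₂ ξ ^ 2 ≤ 0 :=
      div_nonpos_of_nonpos_of_nonneg (hcon ξ hξ.1 hξ.2) (sq_nonneg _)
    rw [hξ2] at hle; linarith
  obtain ⟨ρ₁, hρ₁a, hρ₁x, hρ₁W⟩ := hρ₁
  set δ := W ρ₁ with hδ_def
  clear_value δ
  have hρ₁0 : 0 < ρ₁ := lt_of_le_of_lt ha0 hρ₁a
  -- contact set beyond x
  set Scap : Set ℝ := Ici x ∩ u ⁻¹' {0} with hScap_def
  have hScap_closed : IsClosed Scap :=
    (hu_cont.mono (Ici_subset_Ici.mpr hx.le)).preimage_isClosed_of_isClosed isClosed_Ici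
      isClosed_singleton
  have hScap_bdd : BddBelow Scap := ⟨x, fun s hs => hs.1⟩
  by_cases hne2 : Scap.Nonempty
  · -- finite right contact point b
    set b := sInf Scap with hb_def
    have hbS : b ∈ Scap := hScap_closed.csInf_mem hne2 hScap_bdd
    have hlbb : ∀ s ∈ Scap, b ≤ s := fun s hs => csInf_le hScap_bdd hs
    have hub : u b = 0 := hbS.2
    have hxb : x < b := lt_of_le_of_ne hbS.1 (fun e => by rw [← e] at hub; linarith)
    have hb0 : 0 < b := lt_trans hx hxb
    have hu_xb : ∀ ρ, x ≤ ρ → ρ < b → 0 < u ρ := by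
      intro ρ h1 h2
      rcases lt_trichotomy (u ρ) 0 with hneg | hzero | hpos
      · have hsub : Icc (u ρ) (u x) ⊆ u '' Icc x ρ :=
          intermediate_value_Icc' h1
            (hu_cont.mono (fun s hs => mem_Ici.mpr (le_trans hx.le hs.1)))
        obtain ⟨s, hs1, hs2⟩ := hsub ⟨hneg.le, hux.le⟩
        have : b ≤ s := hlbb s ⟨hs1.1, mem_singleton_iff.mpr hs2⟩
        linarith [hs1.2]
      · exact absurd (hlbb ρ ⟨h1, mem_singleton_iff.mpr hzero⟩) (not_le.mpr h2)
      · exact hpos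
    have hu_ab : ∀ ρ, a < ρ → ρ < b → 0 < u ρ := by
      intro ρ h1 h2
      rcases le_or_gt ρ x with hc | hc
      · exact hu_ax ρ h1 hc
      · exact hu_xb ρ hc.le h2
    -- bound on deriv F₂ on [x,b]
    obtain ⟨K0, hK0⟩ := (isCompact_Icc (a := x) (b := b)).exists_bound_of_continuousOn
      (f := deriv F₂) (fun s hs =>
        ((hF₂diff s (mem_Ioi.mpr (lt_of_lt_of_le hx hs.1))).2.continuousAt).continuousWithinAt)
    set K := max K0 0 with hK_def
    have hK : ∀ s ∈ Icc x b, |deriv F₂ s| ≤ K :=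
      fun s hs => le_trans (hK0 s hs) (le_max_left _ _)
    have hKnn : (0:ℝ) ≤ K := le_max_right _ _
    clear_value K
    set ε := δ / (K + 1) with hε_def
    have hεpos : 0 < ε := div_pos hρ₁W (by linarith)
    clear_value ε
    -- continuity of u at b
    have hucb : ContinuousAt u b :=
      ((hF₁diff b (mem_Ioi.mpr hb0)).1.sub (hF₂diff b (mem_Ioi.mpr hb0)).1).continuousAt
    obtain ⟨η, hη, hηball⟩ := Metric.continuousAt_iff.mp hucb ε hεpos
    set ρ' := max (b - η / 2) ((x + b) / 2) with hρ'_def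
    have hρ'x : x < ρ' := lt_of_lt_of_le (by linarith) (le_max_right _ _)
    have hρ'b : ρ' < b := max_lt (by linarith) (by linarith)
    have hρ'close : ∀ s, ρ' ≤ s → s ≤ b → |u s| < ε := by
      intro s hs1 hs2
      have h1 : b - η / 2 ≤ ρ' := le_max_left _ _
      have hd : dist s b < η := by
        rw [Real.dist_eq, abs_lt]; constructor <;> linarith
      have := hηball hd
      rwa [Real.dist_eq, hub, sub_zero] at this
    have huρ' : 0 < u ρ' := hu_xb ρ' hρ'x.le hρ'b
    -- MVT for u on [ρ', b]
    obtain ⟨ξ, hξ, hξ2⟩ := exists_hasDerivAt_eq_slope u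
      (fun s => deriv F₁ s - deriv F₂ s) hρ'b
      (fun s hs => (((hd1 s (lt_trans hx (lt_of_lt_of_le hρ'x hs.1))).sub
        (hd2 s (lt_trans hx (lt_of_lt_of_le hρ'x hs.1)))).continuousAt).continuousWithinAt)
      (fun s hs => (hd1 s (lt_trans hx (lt_trans hρ'x hs.1))).sub
        (hd2 s (lt_trans hx (lt_trans hρ'x hs.1))))
    have hξx : x < ξ := lt_trans hρ'x hξ.1
    have hξ0 : 0 < ξ := lt_trans hx hξx
    have hslope : deriv F₁ ξ - deriv F₂ ξ < 0 := by
      rw [hξ2, hub]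
      apply div_neg_of_neg_of_pos (by linarith) (by linarith [hξ.2, hρ'b])
    have hWξ : W ξ = (deriv F₁ ξ - deriv F₂ ξ) * F₂ ξ - deriv F₂ ξ * u ξ := by
      rw [hW_def, hu_def]; ring
    have huξpos : 0 < u ξ := hu_xb ξ hξx.le hξ.2
    have huξlt : u ξ < ε := by
      have := hρ'close ξ hξ.1.le hξ.2.le
      rwa [abs_of_pos huξpos] at this
    have hF2ξ : 0 < F₂ ξ := hF₂pos ξ (mem_Ici.mpr hξ0.le)
    have hKξ : |deriv F₂ ξ| ≤ K := hK ξ ⟨hξx.le, hξ.2.le⟩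
    have hWξlt : W ξ < δ := by
      rw [hWξ]
      have h1 : (deriv F₁ ξ - deriv F₂ ξ) * F₂ ξ < 0 := mul_neg_of_neg_of_pos hslope hF2ξ
      have h2 : deriv F₂ ξ * u ξ ≥ -(K * ε) := by
        have habs := abs_le.mp hKξ
        have p1 : 0 ≤ (K + deriv F₂ ξ) * u ξ :=
          mul_nonneg (by linarith only [habs.1]) huξpos.le
        have p2 : 0 ≤ K * (ε - u ξ) :=
          mul_nonneg hKnn (by linarith only [huξlt])
        nlinarith only [p1, p2]
      have h3 : K * ε < δ := by
        have hK1 : (0:ℝ) < K + 1 := by linarith only [hKnn]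
        have he : ε * (K + 1) = δ := by
          rw [hε_def]; exact div_mul_cancel₀ _ (ne_of_gt hK1)
        nlinarith only [hεpos, he]
      linarith only [h1, h2, h3]
    have hWgt : δ < W ξ := by
      rw [hδ_def]
      exact hWmono ρ₁ ξ hρ₁0 (lt_trans hρ₁x hξx)
        (fun s hs1 hs2 => sub_pos.mp (hu_ab s (lt_of_lt_of_le hρ₁a hs1)
          (lt_of_le_of_lt hs2 hξ.2)))
    linarith only [hWξlt, hWgt]
  · -- no contact beyond x : u > 0 on (a, ∞)
    have hu_all : ∀ ρ, a < ρ → 0 < u ρ := by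
      intro ρ h1
      rcases le_or_gt ρ x with hc | hc
      · exact hu_ax ρ h1 hc
      · rcases lt_trichotomy (u ρ) 0 with hneg | hzero | hpos
        · have hsub : Icc (u ρ) (u x) ⊆ u '' Icc x ρ :=
            intermediate_value_Icc' hc.le
              (hu_cont.mono (fun s hs => mem_Ici.mpr (le_trans hx.le hs.1)))
          obtain ⟨s, hs1, hs2⟩ := hsub ⟨hneg.le, hux.le⟩
          exact absurd ⟨s, hs1.1, mem_singleton_iff.mpr hs2⟩ hne2
        · exact absurd ⟨ρ, hc.le, mem_singleton_iff.mpr hzero⟩ hne2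
        · exact hpos
    set R' := max R ρ₁ with hR'_def
    have hR'0 : 0 < R' := lt_of_lt_of_le hρ₁0 (le_max_right _ _)
    have hdd : ∀ (F : ℝ → ℝ),
        (∀ ρ ∈ Ioi (0:ℝ), DifferentiableAt ℝ F ρ ∧ DifferentiableAt ℝ (deriv F) ρ) →
        (∀ ρ ∈ Ioi (0:ℝ), ρ ^ 2 * deriv (deriv F) ρ
          = (F ρ ^ 2 - 1) * F ρ - (J ρ ^ 2 - ρ ^ 2 * h ρ ^ 2) * F ρ) →
        (∀ ρ ∈ Ici (0:ℝ), 0 < F ρ) → Tendsto F atTop (𝓝 0) →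
        Tendsto (deriv F) atTop (𝓝 0) := by
      intro F hFdiff hFode hFpos hFlim
      apply aux_decay F R' hR'0
      · intro s hs
        exact ((hFdiff s (mem_Ioi.mpr (lt_of_lt_of_le hR'0 hs))).1).hasDerivAt
      · apply StrictMonoOn.monotoneOn
        apply strictMonoOn_of_deriv_pos (convex_Ici R')
        · intro s hs
          exact ((hFdiff s (mem_Ioi.mpr (lt_of_lt_of_le hR'0 hs))).2.continuousAt).continuousWithinAt
        · intro s hs
          rw [interior_Ici] at hs
          have hs0 : 0 < s := lt_trans hR'0 hs
          have hsR : R ≤ s := le_trans (le_max_left _ _) hs.le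
          have e := hFode s (mem_Ioi.mpr hs0)
          have hFs : 0 < F s := hFpos s (mem_Ici.mpr hs0.le)
          have hVs := hV s hsR
          have hrhs : 0 < s ^ 2 * deriv (deriv F) s := by
            rw [e]; nlinarith [sq_nonneg (F s)]
          by_contra hle
          push_neg at hle
          nlinarith [pow_pos hs0 2]
      · intro s hs
        exact hFpos s (mem_Ici.mpr (le_trans hR'0.le hs))
      · exact hFlim
    have hd1lim := hdd F₁ hF₁diff hF₁ode hF₁pos hF₁lim
    have hd2lim := hdd F₂ hF₂diff hF₂ode hF₂pos hF₂lim
    have hWlim : Tendsto W atTop (𝓝 0) := by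
      have := (hd1lim.mul hF₂lim).sub (hd2lim.mul hF₁lim)
      simpa using this
    obtain ⟨ρ₂, hρ₂1, hρ₂2⟩ :=
      ((hWlim.eventually_lt_const hρ₁W).and (eventually_ge_atTop (ρ₁ + 1))).exists
    have hgt : δ < W ρ₂ := by
      rw [hδ_def]
      exact hWmono ρ₁ ρ₂ hρ₁0 (by linarith)
        (fun s hs1 hs2 => sub_pos.mp (hu_all s (lt_of_lt_of_le hρ₁a hs1)))
    linarith


/-- Uniqueness for the boundary value problem of the `F`-equation among nonvanishing
solutions, under the standing hypotheses on `(J, h)`. -/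
theorem F_bvp_uniqueness
    (C k Rstar : ℝ) (hC0 : 0 ≤ C) (hC1 : C < 1) (hk0 : 0 < k) (hk1 : k < 1)
    (hRstar : 0 < Rstar) (J h : ℝ → ℝ)
    (hJcont : ContinuousOn J (Ici 0)) (hhcont : ContinuousOn h (Ici 0))
    (hJmono : MonotoneOn J (Ici 0)) (hhmono : MonotoneOn h (Ici 0))
    (hJ0 : J 0 = 0) (hh0 : h 0 = 0)
    (hsmall : ∀ ρ ∈ Ioc (0:ℝ) 1, 0 < J ρ ∧ J ρ ≤ ρ ^ (1 + k) * Rstar ∧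
      0 < ρ * h ρ ∧ ρ * h ρ ≤ ρ ^ (1 + k) * Rstar)
    (hhlim : Tendsto h atTop (𝓝 1))
    (hJlim : Tendsto (fun ρ => J ρ / ρ) atTop (𝓝 C))
    (F₁ F₂ : ℝ → ℝ)
    (hF₁C1 : ContDiffOn ℝ 1 F₁ (Ici 0)) (hF₂C1 : ContDiffOn ℝ 1 F₂ (Ici 0))
    (hF₁diff : ∀ ρ ∈ Ioi (0:ℝ), DifferentiableAt ℝ F₁ ρ ∧ DifferentiableAt ℝ (deriv F₁) ρ)
    (hF₂diff : ∀ ρ ∈ Ioi (0:ℝ), DifferentiableAt ℝ F₂ ρ ∧ DifferentiableAt ℝ (deriv F₂) ρ)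
    (hF₁ode : ∀ ρ ∈ Ioi (0:ℝ), ρ ^ 2 * deriv (deriv F₁) ρ
      = (F₁ ρ ^ 2 - 1) * F₁ ρ - (J ρ ^ 2 - ρ ^ 2 * h ρ ^ 2) * F₁ ρ)
    (hF₂ode : ∀ ρ ∈ Ioi (0:ℝ), ρ ^ 2 * deriv (deriv F₂) ρ
      = (F₂ ρ ^ 2 - 1) * F₂ ρ - (J ρ ^ 2 - ρ ^ 2 * h ρ ^ 2) * F₂ ρ)
    (hF₁0 : F₁ 0 = 1) (hF₂0 : F₂ 0 = 1)
    (hF₁lim : Tendsto F₁ atTop (𝓝 0)) (hF₂lim : Tendsto F₂ atTop (𝓝 0))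
    (hF₁ne : ∀ ρ ∈ Ici (0:ℝ), F₁ ρ ≠ 0) (hF₂ne : ∀ ρ ∈ Ici (0:ℝ), F₂ ρ ≠ 0) :
    EqOn F₁ F₂ (Ici 0) := by
  have hC2 : C ^ 2 < 1 := by nlinarith
  have hm : 0 < (1 - C ^ 2) / 2 := by linarith
  have htend : Tendsto (fun ρ => h ρ ^ 2 - (J ρ / ρ) ^ 2) atTop (𝓝 (1 - C ^ 2)) := by
    have := (hhlim.pow 2).sub (hJlim.pow 2)
    simpa using this
  have h1 : ∀ᶠ ρ in atTop, (1 - C ^ 2) / 2 < h ρ ^ 2 - (J ρ / ρ) ^ 2 :=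
    htend.eventually_const_lt (by linarith)
  have h2 : ∀ᶠ ρ : ℝ in atTop, 2 / ((1 - C ^ 2) / 2) + 1 ≤ ρ :=
    eventually_ge_atTop _
  have h3 : ∀ᶠ ρ : ℝ in atTop, 1 ≤ ρ := eventually_ge_atTop 1
  obtain ⟨R, hR⟩ := eventually_atTop.mp ((h1.and h2).and h3)
  have hV : ∀ ρ, R ≤ ρ → 1 < ρ ^ 2 * h ρ ^ 2 - J ρ ^ 2 := by
    intro ρ hρ
    obtain ⟨⟨hb1, hb2⟩, hb3⟩ := hR ρ hρ
    have hρ0 : (0:ℝ) < ρ := by linarith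
    have hJeq : J ρ ^ 2 = (J ρ / ρ) ^ 2 * ρ ^ 2 := by
      field_simp
    have hkey : ρ ^ 2 * h ρ ^ 2 - J ρ ^ 2
        = (h ρ ^ 2 - (J ρ / ρ) ^ 2) * ρ ^ 2 := by
      rw [hJeq]; ring
    rw [hkey]
    have hρ2 : ρ ≤ ρ ^ 2 := by nlinarith
    have hmρ : 2 / ((1 - C ^ 2) / 2) < ρ := by linarith
    have hlt2 : 2 < ρ * ((1 - C ^ 2) / 2) := (div_lt_iff₀ hm).mp hmρ
    have e1 : (1 - C ^ 2) / 2 * ρ ^ 2 ≤ (h ρ ^ 2 - (J ρ / ρ) ^ 2) * ρ ^ 2 :=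
      mul_le_mul_of_nonneg_right hb1.le (sq_nonneg ρ)
    have e2 : (1 - C ^ 2) / 2 * ρ ≤ (1 - C ^ 2) / 2 * ρ ^ 2 :=
      mul_le_mul_of_nonneg_left hρ2 hm.le
    nlinarith only [e1, e2, hlt2]
  have hF₁pos := aux_pos F₁ hF₁C1.continuousOn hF₁0 hF₁ne
  have hF₂pos := aux_pos F₂ hF₂C1.continuousOn hF₂0 hF₂ne
  intro ρ hρ
  by_contra hne
  have hρ0 : 0 < ρ := by
    rcases eq_or_lt_of_le (mem_Ici.mp hρ) with he | hlt
    · exact absurd (by rw [← he, hF₁0, hF₂0]) hne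
    · exact hlt
  rcases lt_or_gt_of_ne hne with hlt | hgt
  · exact absurd (aux_key J h R hV F₂ F₁ hF₂C1 hF₁C1 hF₂diff hF₁diff hF₂ode hF₁ode
      hF₂0 hF₁0 hF₂lim hF₁lim hF₂pos hF₁pos ρ hρ0 hlt) (fun f => f)
  · exact absurd (aux_key J h R hV F₁ F₂ hF₁C1 hF₂C1 hF₁diff hF₂diff hF₁ode hF₂ode
      hF₁0 hF₂0 hF₁lim hF₂lim hF₁pos hF₂pos ρ hρ0 hgt) (fun f => f)
end

section
/- Let f be a twice continuously differentiable function on an interval (−∞,S) solving the autonomous equation f''(s)−f'(s)=2f(s)+3f(s)²+f(s)³, with f(s)→0 and f'(s)→0 as s→−∞ and with ∫_{−∞}^s (f'(α))² dα finite for each s<S. Then for every s<S one has the identity (f'(s))² = 2 f(s)² (f(s)/2+1)² + 2∫_{−∞}^s (f'(α))² dα. -/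
open Real Set Filter Topology MeasureTheory

/-- Energy identity for the rescaled autonomous equation `f'' - f' = 2f + 3f² + f³` on
`(-∞, S)` with decay at `-∞`:
`(f'(s))² = 2 f(s)² (f(s)/2 + 1)² + 2 ∫_{-∞}^s (f'(α))² dα`. -/
theorem energy_identity_autonomous (S : ℝ) (f : ℝ → ℝ)
    (hreg : ContDiffOn ℝ 2 f (Iio S))
    (hode : ∀ s ∈ Iio S, deriv (deriv f) s - deriv f s
      = 2 * f s + 3 * f s ^ 2 + f s ^ 3)
    (hf : Tendsto f atBot (𝓝 0))
    (hf' : Tendsto (deriv f) atBot (𝓝 0))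
    (hint : ∀ s ∈ Iio S, IntegrableOn (fun α => (deriv f α) ^ 2) (Iio s)) :
    ∀ s ∈ Iio S, (deriv f s) ^ 2
      = 2 * f s ^ 2 * (f s / 2 + 1) ^ 2 + 2 * ∫ α in Iio s, (deriv f α) ^ 2 := by
  intro s hs
  have hopen : IsOpen (Iio S) := isOpen_Iio
  have hreg' : ContDiffOn ℝ 1 (deriv f) (Iio S) :=
    hreg.deriv_of_isOpen hopen (by norm_num)
  have hfd : ∀ t ∈ Iio S, HasDerivAt f (deriv f t) t := by
    intro t ht
    exact ((hreg.differentiableOn (by norm_num)).differentiableAt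
      (hopen.mem_nhds ht)).hasDerivAt
  have hfd2 : ∀ t ∈ Iio S, HasDerivAt (deriv f) (deriv (deriv f) t) t := by
    intro t ht
    exact ((hreg'.differentiableOn (by norm_num)).differentiableAt
      (hopen.mem_nhds ht)).hasDerivAt
  set H : ℝ → ℝ := fun t => (deriv f t) ^ 2 - 2 * f t ^ 2 * (f t / 2 + 1) ^ 2 with hH
  have hHd : ∀ t ∈ Iio S, HasDerivAt H (2 * (deriv f t) ^ 2) t := by
    intro t ht
    have h1 : HasDerivAt (fun u => (deriv f u) ^ 2)
        (2 * deriv f t ^ 1 * deriv (deriv f) t) t := (hfd2 t ht).pow 2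
    have h2 : HasDerivAt (fun u => 2 * f u ^ 2 * (f u / 2 + 1) ^ 2)
        ((2 * (2 * f t ^ 1 * deriv f t)) * (f t / 2 + 1) ^ 2
          + (2 * f t ^ 2) * (2 * (f t / 2 + 1) ^ 1 * (deriv f t / 2))) t := by
      exact (((hfd t ht).pow 2).const_mul 2).mul
        ((((hfd t ht).div_const 2).add_const 1).pow 2)
    have := h1.sub h2
    refine this.congr_deriv ?_
    have hode' := hode t ht
    linear_combination (2 * deriv f t) * hode'
  have hcont : ContinuousOn (fun t => 2 * (deriv f t) ^ 2) (Iio S) :=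
    continuousOn_const.mul (hreg'.continuousOn.pow 2)
  -- FTC on [t, s] for t < s
  have key : ∀ t < s, (∫ x in t..s, 2 * (deriv f x) ^ 2) = H s - H t := by
    intro t hts
    have hsub2 : Icc t s ⊆ Iio S := fun x hx => lt_of_le_of_lt hx.2 hs
    have hsub : Set.uIcc t s ⊆ Iio S := by
      rw [Set.uIcc_of_le hts.le]; exact hsub2
    refine intervalIntegral.integral_eq_sub_of_hasDerivAt
      (fun x hx => hHd x (hsub hx)) ?_
    exact (hcont.mono hsub2).intervalIntegrable_of_Icc hts.le
  -- limits as t → -∞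
  have hlim1 : Tendsto (fun t => (∫ x in t..s, 2 * (deriv f x) ^ 2)) atBot
      (𝓝 (∫ α in Iio s, 2 * (deriv f α) ^ 2)) := by
    have h2 : IntegrableOn (fun α => 2 * (deriv f α) ^ 2) (Iio s) :=
      (hint s hs).const_mul 2
    have h3 : IntegrableOn (fun α => 2 * (deriv f α) ^ 2) (Iic s) :=
      (integrableOn_Iic_iff_integrableOn_Iio).mpr h2
    have := MeasureTheory.intervalIntegral_tendsto_integral_Iic s h3 tendsto_id
    rwa [MeasureTheory.integral_Iic_eq_integral_Iio] at this
  have hHlim : Tendsto H atBot (𝓝 0) := by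
    have : Tendsto H atBot (𝓝 ((0:ℝ) ^ 2 - 2 * (0:ℝ) ^ 2 * ((0:ℝ) / 2 + 1) ^ 2)) := by
      exact (hf'.pow 2).sub (((hf.pow 2).const_mul 2).mul
        (((hf.div_const 2).add_const 1).pow 2))
    simpa using this
  have hlim2 : Tendsto (fun t => H s - H t) atBot (𝓝 (H s)) := by
    simpa using (tendsto_const_nhds (x := H s)).sub hHlim
  have heq : Tendsto (fun t => (∫ x in t..s, 2 * (deriv f x) ^ 2)) atBot (𝓝 (H s)) := by
    refine hlim2.congr' ?_
    filter_upwards [eventually_lt_atBot s] with t ht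
    exact (key t ht).symm
  have hHs : (∫ α in Iio s, 2 * (deriv f α) ^ 2) = H s :=
    tendsto_nhds_unique hlim1 heq
  have hIs : (∫ α in Iio s, 2 * (deriv f α) ^ 2)
      = 2 * ∫ α in Iio s, (deriv f α) ^ 2 := by
    rw [MeasureTheory.integral_const_mul]
  rw [hIs] at hHs
  simp only [hH] at hHs
  linarith
end

section
/- Let f be a twice continuously differentiable solution on its maximal interval of existence (−∞,S) of f''(s)−f'(s)=2f(s)+3f(s)²+f(s)³, with f(s)→0 and f'(s)→0 as s→−∞, f not identically zero, and f'(s)<0 for all s in a neighborhood of −∞. Then f'(s)<0 for every s<S, f(s) is unbounded below as s→S (it tends to −∞), and there exists a finite s₀<S with f(s₀)=−1; that is, f decreases monotonically and crosses the value −1 at a finite point. -/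
open Real Set Filter Topology

noncomputable section JZaux

/-- cubic nonlinearity -/
def Fcub (x : ℝ) : ℝ := 2*x + 3*x^2 + x^3

/-- potential -/
def Vpot (x : ℝ) : ℝ := x^2 + x^3 + x^4/4

lemma Vpot_nonneg (x : ℝ) : 0 ≤ Vpot x := by
  have h : Vpot x = (x*(x+2))^2/4 := by unfold Vpot; ring
  rw [h]; positivity

lemma continuous_Vpot : Continuous Vpot := by unfold Vpot; fun_prop

lemma hasDerivAt_Vpot (x : ℝ) : HasDerivAt Vpot (Fcub x) x := by
  have h := (((hasDerivAt_pow 2 x).add (hasDerivAt_pow 3 x)).add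
    ((hasDerivAt_pow 4 x).div_const 4))
  have he : Vpot = fun y => y^2 + (y^3 + y^4/4) := by funext y; unfold Vpot; ring
  rw [he]
  convert h using 1
  · rfl
  · rfl
  · funext y; simp only [Pi.add_apply]; ring
  · unfold Fcub; push_cast; ring

lemma abs_Fcub_le {x A : ℝ} (h : |x| ≤ A) : |Fcub x| ≤ 2*A + 3*A^2 + A^3 := by
  have h0 : 0 ≤ A := le_trans (abs_nonneg x) h
  have h1 : |Fcub x| ≤ 2*|x| + 3*|x|^2 + |x|^3 := by
    unfold Fcub
    calc |2*x + 3*x^2 + x^3| ≤ |2*x + 3*x^2| + |x^3| := abs_add_le _ _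
      _ ≤ |2*x| + |3*x^2| + |x^3| := by
          gcongr ?_ + _
          exact abs_add_le _ _
      _ = 2*|x| + 3*|x|^2 + |x|^3 := by
          rw [abs_mul, abs_mul, abs_pow, abs_pow]
          norm_num
  refine h1.trans ?_
  have h2 : |x|^2 ≤ A^2 := pow_le_pow_left₀ (abs_nonneg x) h 2
  have h3 : |x|^3 ≤ A^3 := pow_le_pow_left₀ (abs_nonneg x) h 3
  nlinarith [abs_nonneg x]

/-- first order vector field for the system -/
def vf : ℝ × ℝ → ℝ × ℝ := fun p => (p.2, p.2 + Fcub p.1)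

lemma contDiff_vf : ContDiff ℝ 1 vf := by
  unfold vf Fcub
  fun_prop

lemma lipschitzOnWith_vf {r : ℝ} (hr : 0 ≤ r) :
    LipschitzOnWith (3 + 6*r + 3*r^2).toNNReal vf (Metric.closedBall 0 r) := by
  rw [lipschitzOnWith_iff_dist_le_mul]
  intro p hp q hq
  rw [Metric.mem_closedBall, dist_zero_right, Prod.norm_def] at hp hq
  have hp1 : |p.1| ≤ r := le_trans (le_max_left _ _) hp
  have hp2 : |p.2| ≤ r := le_trans (le_max_right _ _) hp
  have hq1 : |q.1| ≤ r := le_trans (le_max_left _ _) hq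
  have hq2 : |q.2| ≤ r := le_trans (le_max_right _ _) hq
  have hd : dist p q = max |p.1 - q.1| |p.2 - q.2| := by
    rw [Prod.dist_eq, Real.dist_eq, Real.dist_eq]
  have hK : ((3 + 6*r + 3*r^2).toNNReal : ℝ) = 3 + 6*r + 3*r^2 := by
    rw [Real.coe_toNNReal]; positivity
  rw [hd, hK, Prod.dist_eq]
  simp only [vf]
  have h1 : |p.1 - q.1| ≤ max |p.1 - q.1| |p.2 - q.2| := le_max_left _ _
  have h2 : |p.2 - q.2| ≤ max |p.1 - q.1| |p.2 - q.2| := le_max_right _ _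
  have hM : (0:ℝ) ≤ max |p.1 - q.1| |p.2 - q.2| := le_trans (abs_nonneg _) h1
  apply max_le
  · simp only [Real.dist_eq]
    nlinarith
  · simp only [Real.dist_eq]
    have hF : |Fcub p.1 - Fcub q.1| ≤ (2 + 6*r + 3*r^2) * |p.1 - q.1| := by
      have : Fcub p.1 - Fcub q.1
          = (p.1 - q.1) * (2 + 3*(p.1 + q.1) + (p.1^2 + p.1*q.1 + q.1^2)) := by
        unfold Fcub; ring
      rw [this, abs_mul, mul_comm]
      apply mul_le_mul_of_nonneg_right _ (abs_nonneg _)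
      calc |2 + 3*(p.1 + q.1) + (p.1^2 + p.1*q.1 + q.1^2)|
          ≤ |2 + 3*(p.1+q.1)| + |p.1^2 + p.1*q.1 + q.1^2| := abs_add_le _ _
        _ ≤ (|(2:ℝ)| + |3*(p.1+q.1)|) + (|p.1^2| + |p.1*q.1| + |q.1^2|) := by
            gcongr
            · exact abs_add_le _ _
            · exact (abs_add_le _ _).trans (by gcongr; exact abs_add_le _ _)
        _ ≤ (2 + 3*(2*r)) + (r^2 + r^2 + r^2) := by
            have e1 : |3*(p.1+q.1)| ≤ 3*(2*r) := by
              rw [abs_mul, abs_of_nonneg (by norm_num : (0:ℝ) ≤ 3)]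
              have := (abs_add_le p.1 q.1).trans (add_le_add hp1 hq1)
              nlinarith
            have e2 : |p.1^2| = |p.1|^2 := by rw [abs_pow]
            have e3 : |q.1^2| = |q.1|^2 := by rw [abs_pow]
            have e4 : |p.1*q.1| ≤ r^2 := by
              rw [abs_mul]; nlinarith [abs_nonneg p.1, abs_nonneg q.1]
            have e5 : |p.1|^2 ≤ r^2 := by nlinarith [abs_nonneg p.1]
            have e6 : |q.1|^2 ≤ r^2 := by nlinarith [abs_nonneg q.1]
            have e7 : |p.1^2| ≤ r^2 := by rw [e2]; exact e5
            have e8 : |q.1^2| ≤ r^2 := by rw [e3]; exact e6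
            have e9 : |(2:ℝ)| = 2 := by norm_num
            rw [e9]
            gcongr
        _ = 2 + 6*r + 3*r^2 := by ring
    calc |p.2 + Fcub p.1 - (q.2 + Fcub q.1)| ≤ |p.2 - q.2| + |Fcub p.1 - Fcub q.1| := by
          have : p.2 + Fcub p.1 - (q.2 + Fcub q.1) = (p.2 - q.2) + (Fcub p.1 - Fcub q.1) := by ring
          rw [this]; exact abs_add_le _ _
      _ ≤ max |p.1 - q.1| |p.2 - q.2| + (2 + 6*r + 3*r^2) * max |p.1 - q.1| |p.2 - q.2| := by
          gcongr
          exact hF.trans (by nlinarith)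
      _ = (3 + 6*r + 3*r^2) * max |p.1 - q.1| |p.2 - q.2| := by ring

lemma open_deriv_facts {f : ℝ → ℝ} {U : Set ℝ} (hU : IsOpen U) (h : ContDiffOn ℝ 2 f U) :
    (∀ s ∈ U, HasDerivAt f (deriv f s) s) ∧
    (∀ s ∈ U, HasDerivAt (deriv f) (deriv (deriv f) s) s) ∧
    ContinuousOn (deriv (deriv f)) U := by
  have h2 : ContDiffOn ℝ (1+1) f U := h
  rw [contDiffOn_succ_iff_deriv_of_isOpen hU] at h2
  obtain ⟨hd1, -, h1⟩ := h2
  have h1' : ContDiffOn ℝ (0+1) (deriv f) U := h1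
  rw [contDiffOn_succ_iff_deriv_of_isOpen hU] at h1'
  obtain ⟨hd2, -, h0⟩ := h1'
  refine ⟨fun s hs => ?_, fun s hs => ?_, by rwa [contDiffOn_zero] at h0⟩
  · exact (hd1 s hs).differentiableAt (hU.mem_nhds hs) |>.hasDerivAt
  · exact (hd2 s hs).differentiableAt (hU.mem_nhds hs) |>.hasDerivAt

lemma sol_facts {α : ℝ → ℝ × ℝ} {T : Set ℝ} (hT : IsOpen T)
    (hαd : ∀ t ∈ T, HasDerivAt α (vf (α t)) t) :
    ContDiffOn ℝ 2 (fun t => (α t).1) T ∧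
    (∀ t ∈ T, deriv (fun t => (α t).1) t = (α t).2) ∧
    (∀ t ∈ T, deriv (deriv (fun t => (α t).1)) t = (α t).2 + Fcub ((α t).1)) := by
  have hcont : ContinuousOn α T := fun t ht =>
    ((hαd t ht).differentiableAt.continuousAt).continuousWithinAt
  have h1 : ∀ t ∈ T, HasDerivAt (fun t => (α t).1) ((α t).2) t := by
    intro t ht
    have := (ContinuousLinearMap.fst ℝ ℝ ℝ).hasFDerivAt.comp_hasDerivAt t (hαd t ht)
    simpa [vf, Function.comp_def] using this
  have h2 : ∀ t ∈ T, HasDerivAt (fun t => (α t).2) ((α t).2 + Fcub ((α t).1)) t := by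
    intro t ht
    have := (ContinuousLinearMap.snd ℝ ℝ ℝ).hasFDerivAt.comp_hasDerivAt t (hαd t ht)
    simpa [vf, Function.comp_def] using this
  have hd1 : ∀ t ∈ T, deriv (fun t => (α t).1) t = (α t).2 := fun t ht => (h1 t ht).deriv
  have hd2 : ∀ t ∈ T, deriv (fun t => (α t).2) t = (α t).2 + Fcub ((α t).1) :=
    fun t ht => (h2 t ht).deriv
  refine ⟨?_, hd1, fun t ht => ?_⟩
  · have : ContDiffOn ℝ (1+1) (fun t => (α t).1) T := by
      rw [contDiffOn_succ_iff_deriv_of_isOpen hT]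
      refine ⟨fun t ht => (h1 t ht).differentiableAt.differentiableWithinAt, by simp, ?_⟩
      have : ContDiffOn ℝ (0+1) (fun t => (α t).2) T := by
        rw [contDiffOn_succ_iff_deriv_of_isOpen hT]
        refine ⟨fun t ht => (h2 t ht).differentiableAt.differentiableWithinAt, by simp, ?_⟩
        rw [contDiffOn_zero]
        apply ContinuousOn.congr (f := fun t => (α t).2 + Fcub ((α t).1))
        · apply ContinuousOn.add (hcont.snd)
          have : Continuous Fcub := by unfold Fcub; fun_prop
          exact this.comp_continuousOn hcont.fst
        · intro t ht; exact hd2 t ht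
      have h1' : ContDiffOn ℝ 1 (fun t => (α t).2) T := this
      exact h1'.congr hd1
    exact this
  · have he : Set.EqOn (deriv (fun t => (α t).1)) (fun t => (α t).2) T := hd1
    have : deriv (deriv (fun t => (α t).1)) t = deriv (fun t => (α t).2) t := by
      apply Filter.EventuallyEq.deriv_eq
      exact Filter.eventuallyEq_iff_exists_mem.mpr ⟨T, hT.mem_nhds ht, he⟩
    rw [this]; exact hd2 t ht

end JZaux

/-- A nontrivial solution of `f'' - f' = 2f + 3f² + f³` on its maximal interval of existence
`(-∞, S)`, decaying at `-∞` and initially strictly decreasing, is strictly decreasing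
everywhere, tends to `-∞` at `S`, and crosses the value `-1` at a finite point `s₀ < S`. -/
theorem f_crosses_minus_one (S : ℝ) (f : ℝ → ℝ)
    (hreg : ContDiffOn ℝ 2 f (Iio S))
    (hode : ∀ s ∈ Iio S, deriv (deriv f) s - deriv f s
      = 2 * f s + 3 * f s ^ 2 + f s ^ 3)
    (hf : Tendsto f atBot (𝓝 0))
    (hf' : Tendsto (deriv f) atBot (𝓝 0))
    (hnontriv : ∃ s ∈ Iio S, f s ≠ 0)
    (hinit : ∃ s₁ < S, ∀ s < s₁, deriv f s < 0)
    -- maximality: f admits no extension as a solution beyond S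
    (hmax : ¬ ∃ (S' : ℝ) (g : ℝ → ℝ), S < S' ∧ ContDiffOn ℝ 2 g (Iio S') ∧
      EqOn g f (Iio S) ∧
      (∀ s ∈ Iio S', deriv (deriv g) s - deriv g s
        = 2 * g s + 3 * g s ^ 2 + g s ^ 3)) :
    (∀ s ∈ Iio S, deriv f s < 0) ∧
    Tendsto f (𝓝[<] S) atBot ∧
    ∃ s₀ < S, f s₀ = -1 := by
  obtain ⟨s₁, hs₁S, hs₁⟩ := hinit
  obtain ⟨hdf, hdf2, hcont2⟩ := open_deriv_facts isOpen_Iio hreg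
  -- second derivative via the ODE
  have hdf' : ∀ s ∈ Iio S, HasDerivAt (deriv f) (deriv f s + Fcub (f s)) s := by
    intro s hs
    have h := hdf2 s hs
    have : deriv (deriv f) s = deriv f s + Fcub (f s) := by
      have := hode s hs; unfold Fcub; linarith
    rwa [this] at h
  have hcf : ContinuousOn f (Iio S) := fun s hs => (hdf s hs).continuousAt.continuousWithinAt
  have hcf' : ContinuousOn (deriv f) (Iio S) :=
    fun s hs => (hdf' s hs).continuousAt.continuousWithinAt
  -- energy function
  set E : ℝ → ℝ := fun s => (deriv f s)^2/2 - Vpot (f s) with hEdef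
  have hE : ∀ s ∈ Iio S, HasDerivAt E ((deriv f s)^2) s := by
    intro s hs
    have h1 : HasDerivAt (fun u => (deriv f u)^2/2)
        ((2 * (deriv f s)^1 * (deriv f s + Fcub (f s)))/2) s := ((hdf' s hs).pow 2).div_const 2
    have h2 : HasDerivAt (fun u => Vpot (f u)) (Fcub (f s) * deriv f s) s :=
      (hasDerivAt_Vpot (f s)).comp s (hdf s hs)
    have h3 := h1.sub h2
    exact h3.congr_deriv (by ring)
  have hEcont : ContinuousOn E (Iio S) :=
    fun s hs => (hE s hs).continuousAt.continuousWithinAt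
  have hEmono : MonotoneOn E (Iio S) := by
    apply monotoneOn_of_deriv_nonneg (convex_Iio S) hEcont
    · intro s hs
      rw [interior_Iio] at hs
      exact (hE s hs).differentiableAt.differentiableWithinAt
    · intro s hs
      rw [interior_Iio] at hs
      rw [(hE s hs).deriv]
      positivity
  have hEtend : Tendsto E atBot (𝓝 0) := by
    have h1 : Tendsto (fun s => (deriv f s)^2/2) atBot (𝓝 (0^2/2)) := (hf'.pow 2).div_const 2
    have h2 : Tendsto (fun s => Vpot (f s)) atBot (𝓝 (Vpot 0)) :=
      (continuous_Vpot.tendsto 0).comp hf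
    have h3 := h1.sub h2
    have : (0:ℝ)^2/2 - Vpot 0 = 0 := by unfold Vpot; norm_num
    rwa [this] at h3
  have hE0 : ∀ s ∈ Iio S, 0 ≤ E s := by
    intro s hs
    apply le_of_tendsto hEtend
    filter_upwards [eventually_le_atBot s] with t ht
    exact hEmono (lt_of_le_of_lt ht hs) hs ht
  have hEpos : ∀ s ∈ Iio S, s₁ ≤ s → 0 < E s := by
    intro s hs hs₁s
    have hstrict : StrictMonoOn E (Iio s₁) := by
      apply strictMonoOn_of_deriv_pos (convex_Iio s₁)
      · exact hEcont.mono (fun x hx => lt_trans hx hs₁S)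
      · intro x hx
        rw [interior_Iio] at hx
        have hxS : x ∈ Iio S := lt_trans hx hs₁S
        rw [(hE x hxS).deriv]
        have h := hs₁ x hx
        nlinarith
    have hsS : s < S := hs
    have h1 : E (s₁ - 2) < E (s₁ - 1) :=
      hstrict (by simp only [mem_Iio]; linarith) (by simp only [mem_Iio]; linarith) (by linarith)
    have h2 : E (s₁ - 1) ≤ E s :=
      hEmono (by simp only [mem_Iio]; linarith) hs (by linarith)
    have h3 : 0 ≤ E (s₁ - 2) := hE0 _ (by simp only [mem_Iio]; linarith)
    linarith
  -- Part A : deriv f < 0 on Iio S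
  have partA : ∀ s ∈ Iio S, deriv f s < 0 := by
    by_contra hA
    push_neg at hA
    obtain ⟨a₀, ha₀S, ha₀⟩ := hA
    have hs₁a₀ : s₁ ≤ a₀ := by
      by_contra h
      push_neg at h
      exact absurd ha₀ (not_le.mpr (hs₁ a₀ h))
    set A := Icc s₁ a₀ ∩ {x | 0 ≤ deriv f x} with hAdef
    have hAclosed : IsClosed A := by
      have : A = Icc s₁ a₀ ∩ deriv f ⁻¹' (Ici 0) := rfl
      rw [this]
      apply ContinuousOn.preimage_isClosed_of_isClosed
        (hcf'.mono (fun x hx => lt_of_le_of_lt hx.2 ha₀S)) isClosed_Icc isClosed_Ici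
    have hAcomp : IsCompact A := isCompact_Icc.of_isClosed_subset hAclosed inter_subset_left
    have hAne : A.Nonempty := ⟨a₀, ⟨hs₁a₀, le_refl _⟩, ha₀⟩
    set c := sInf A with hcdef
    have hcA : c ∈ A := hAcomp.sInf_mem hAne
    have hcS : c ∈ Iio S := lt_of_le_of_lt hcA.1.2 ha₀S
    have hneg : ∀ s < c, deriv f s < 0 := by
      intro s hsc
      rcases lt_or_ge s s₁ with h | h
      · exact hs₁ s h
      · by_contra hcon
        push_neg at hcon
        have hsA : s ∈ A := ⟨⟨h, le_trans hsc.le hcA.1.2⟩, hcon⟩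
        exact absurd (csInf_le hAcomp.bddBelow hsA) (not_le.mpr hsc)
    have hc0 : deriv f c = 0 := by
      have hle : deriv f c ≤ 0 := by
        have htd : Tendsto (deriv f) (𝓝[<] c) (𝓝 (deriv f c)) :=
          ((hdf' c hcS).continuousAt.tendsto).mono_left nhdsWithin_le_nhds
        apply le_of_tendsto htd
        filter_upwards [self_mem_nhdsWithin] with t ht
        exact (hneg t ht).le
      exact le_antisymm hle hcA.2
    have h1 : 0 < E c := hEpos c hcS hcA.1.1
    have h2 : E c ≤ 0 := by
      rw [hEdef]
      simp only [hc0]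
      have := Vpot_nonneg (f c)
      norm_num
      linarith
    linarith
  -- f is strictly decreasing and negative
  have hanti : StrictAntiOn f (Iio S) := by
    apply strictAntiOn_of_deriv_neg (convex_Iio S) hcf
    intro x hx
    rw [interior_Iio] at hx
    exact partA x hx
  have hfneg : ∀ s ∈ Iio S, f s < 0 := by
    intro s hs
    have hsS : s < S := hs
    have h1 : f s < f (s - 1) := hanti (by simp only [mem_Iio]; linarith) hs (by linarith)
    have h2 : f (s - 1) ≤ 0 := by
      apply ge_of_tendsto hf
      filter_upwards [eventually_le_atBot (s - 2)] with t ht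
      exact (hanti (by simp only [mem_Iio]; linarith)
        (by simp only [mem_Iio]; linarith) (by linarith)).le
    linarith
  -- Part B : f tends to -∞ at S
  have hBlow : Tendsto f (𝓝[<] S) atBot := by
    by_contra hB
    -- f is bounded below
    obtain ⟨B, hBle⟩ : ∃ B, ∀ s ∈ Iio S, B ≤ f s := by
      by_contra hc
      push_neg at hc
      apply hB
      rw [tendsto_atBot]
      intro b
      obtain ⟨s, hsS, hsB⟩ := hc b
      filter_upwards [Ioo_mem_nhdsLT_of_mem (show S ∈ Ioc s S from ⟨hsS, le_refl S⟩)] with u hu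
      exact ((hanti hsS (mem_Iio.mpr hu.2) hu.1).le).trans hsB.le
    have hSm1 : (S - 1 : ℝ) ∈ Iio S := by simp only [mem_Iio]; linarith
    have hBneg : B < 0 := lt_of_le_of_lt (hBle _ hSm1) (hfneg _ hSm1)
    set A₁ : ℝ := -B with hA₁def
    have hA₁pos : 0 < A₁ := by simp only [hA₁def]; linarith
    have habsf : ∀ s ∈ Iio S, |f s| ≤ A₁ := by
      intro s hs
      rw [abs_le]
      constructor
      · simp only [hA₁def]; linarith [hBle s hs]
      · simp only [hA₁def]; linarith [hfneg s hs]
    set M : ℝ := 2*A₁ + 3*A₁^2 + A₁^3 with hMdef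
    have hMF : ∀ s ∈ Iio S, |Fcub (f s)| ≤ M := fun s hs => abs_Fcub_le (habsf s hs)
    have hMpos : 0 ≤ M := le_trans (abs_nonneg _) (hMF _ hSm1)
    set C₀ : ℝ := Real.exp (-(S-1)) * M with hC₀def
    have hC₀pos : 0 ≤ C₀ := by positivity
    -- W = e^{-s} f'  satisfies  W' = e^{-s} F(f)
    set W : ℝ → ℝ := fun s => Real.exp (-s) * deriv f s with hWdef
    have hW : ∀ s ∈ Iio S, HasDerivAt W (Real.exp (-s) * Fcub (f s)) s := by
      intro s hs
      have hexp : HasDerivAt (fun u : ℝ => Real.exp (-u)) (-Real.exp (-s)) s := by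
        simpa [Function.comp_def] using (Real.hasDerivAt_exp (-s)).comp s (hasDerivAt_neg s)
      have h := hexp.mul (hdf' s hs)
      exact h.congr_deriv (by ring)
    have hWbound : ∀ s ∈ Ico (S-1) S, |W s - W (S-1)| ≤ C₀ * (s - (S-1)) := by
      intro s hsmem
      have hsS : s < S := hsmem.2
      have hbd : ∀ x ∈ Ico (S-1) s, ‖Real.exp (-x) * Fcub (f x)‖ ≤ C₀ := by
        intro x hx
        have hx1 : Real.exp (-x) ≤ Real.exp (-(S-1)) :=
          Real.exp_le_exp.mpr (by linarith [hx.1])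
        have hx2 : |Fcub (f x)| ≤ M := hMF x (mem_Iio.mpr (lt_trans hx.2 hsS))
        rw [Real.norm_eq_abs, abs_mul, abs_of_pos (Real.exp_pos _)]
        calc Real.exp (-x) * |Fcub (f x)| ≤ Real.exp (-(S-1)) * M :=
              mul_le_mul hx1 hx2 (abs_nonneg _) (Real.exp_pos _).le
          _ = C₀ := rfl
      have key := norm_image_sub_le_of_norm_deriv_le_segment'
        (f := W) (f' := fun x => Real.exp (-x) * Fcub (f x)) (a := S-1) (b := s) (C := C₀)
        (fun x hx => (hW x (mem_Iio.mpr (lt_of_le_of_lt hx.2 hsS))).hasDerivWithinAt)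
        hbd s (right_mem_Icc.mpr hsmem.1)
      simpa [Real.norm_eq_abs] using key
    set A₂ : ℝ := Real.exp S * (|W (S-1)| + C₀) with hA₂def
    have hA₂pos : 0 ≤ A₂ := by positivity
    have hf'bound : ∀ s ∈ Ico (S-1) S, |deriv f s| ≤ A₂ := by
      intro s hsmem
      have h1 : deriv f s = Real.exp s * W s := by
        simp only [hWdef]
        rw [← mul_assoc, ← Real.exp_add]
        simp
      have h2 : |W s| ≤ |W (S-1)| + C₀ * (s - (S-1)) := by
        have := hWbound s hsmem
        have habs := abs_sub_abs_le_abs_sub (W s) (W (S-1))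
        linarith
      have h3 : C₀ * (s - (S-1)) ≤ C₀ := by
        have : s - (S-1) ≤ 1 := by linarith [hsmem.2]
        nlinarith
      rw [h1, abs_mul, abs_of_pos (Real.exp_pos s)]
      have h4 : Real.exp s ≤ Real.exp S := Real.exp_le_exp.mpr hsmem.2.le
      have h5 : |W s| ≤ |W (S-1)| + C₀ := by linarith
      calc Real.exp s * |W s| ≤ Real.exp S * (|W (S-1)| + C₀) :=
            mul_le_mul h4 h5 (abs_nonneg _) (Real.exp_pos _).le
        _ = A₂ := rfl
    -- limits of f, E, f' at S from the left
    set L : ℝ := sInf (f '' Iio S) with hLdef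
    have hfL : Tendsto f (𝓝[<] S) (𝓝 L) :=
      MonotoneOn.tendsto_nhdsLT (β := ℝᵒᵈ) hanti.antitoneOn.dual_right
        ⟨B, fun y hy => by obtain ⟨x, hx, rfl⟩ := hy; exact hBle x hx⟩
    have hEbdd : BddAbove (E '' Iio S) := by
      refine ⟨max (E (S-1)) (A₂^2/2), fun y hy => ?_⟩
      obtain ⟨x, hx, rfl⟩ := hy
      rcases le_or_gt x (S-1) with h | h
      · exact le_trans (hEmono (mem_Iio.mpr (lt_of_le_of_lt h hSm1)) hSm1 h) (le_max_left _ _)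
      · have hb := hf'bound x ⟨h.le, hx⟩
        have : E x ≤ A₂^2/2 := by
          have h1 : (deriv f x)^2 ≤ A₂^2 := by
            rw [← sq_abs]
            exact pow_le_pow_left₀ (abs_nonneg _) hb 2
          have h2 := Vpot_nonneg (f x)
          simp only [hEdef]
          linarith
        exact le_trans this (le_max_right _ _)
    set e : ℝ := sSup (E '' Iio S) with hedef
    have hEe : Tendsto E (𝓝[<] S) (𝓝 e) :=
      MonotoneOn.tendsto_nhdsLT hEmono hEbdd
    have hkey : ∀ s ∈ Iio S, deriv f s = -Real.sqrt (2*(E s + Vpot (f s))) := by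
      intro s hs
      have hsq : 2*(E s + Vpot (f s)) = (deriv f s)^2 := by
        simp only [hEdef]; ring
      rw [hsq, Real.sqrt_sq_eq_abs, abs_of_nonpos (partA s hs).le, neg_neg]
    set m : ℝ := -Real.sqrt (2*(e + Vpot L)) with hmdef
    have hmlim : Tendsto (deriv f) (𝓝[<] S) (𝓝 m) := by
      have h1 : Tendsto (fun s => 2*(E s + Vpot (f s))) (𝓝[<] S) (𝓝 (2*(e + Vpot L))) :=
        (hEe.add ((continuous_Vpot.tendsto L).comp hfL)).const_mul 2
      have h2 : Tendsto (fun s => -Real.sqrt (2*(E s + Vpot (f s)))) (𝓝[<] S) (𝓝 m) := by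
        simp only [hmdef]
        exact ((Real.continuous_sqrt.tendsto _).comp h1).neg
      apply h2.congr'
      filter_upwards [self_mem_nhdsWithin] with s hs
      exact (hkey s hs).symm
    -- the planar system
    set γ : ℝ → ℝ × ℝ := fun s => (f s, deriv f s) with hγdef
    have hγd : ∀ s ∈ Iio S, HasDerivAt γ (vf (γ s)) s := by
      intro s hs
      have := (hdf s hs).prodMk (hdf' s hs)
      simpa [vf] using this
    have hγlim : Tendsto γ (𝓝[<] S) (𝓝 (L, m)) := hfL.prodMk_nhds hmlim
    set P : ℝ × ℝ := (L, m) with hPdef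
    set γb : ℝ → ℝ × ℝ := fun s => if s < S then γ s else P with hγbdef
    have hγbS : γb S = P := by simp only [hγbdef, lt_irrefl, if_false]
    have hγbEq : EqOn γb γ (Iio S) := fun s hs => by simp only [hγbdef, if_pos (mem_Iio.mp hs)]
    have hγbEv : ∀ s ∈ Iio S, γb =ᶠ[𝓝 s] γ := fun s hs =>
      Filter.eventuallyEq_iff_exists_mem.mpr ⟨Iio S, isOpen_Iio.mem_nhds hs, hγbEq⟩
    have hγbd : ∀ s ∈ Iio S, HasDerivAt γb (vf (γ s)) s := fun s hs =>
      (hγd s hs).congr_of_eventuallyEq (hγbEv s hs)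
    have hγblim : Tendsto γb (𝓝[<] S) (𝓝 P) := by
      apply hγlim.congr'
      filter_upwards [self_mem_nhdsWithin] with s hs
      exact (hγbEq hs).symm
    have hend : HasDerivWithinAt γb (vf P) (Iic S) S := by
      apply hasDerivWithinAt_Iic_of_tendsto_deriv
        (fun s hs => (hγbd s hs).differentiableAt.differentiableWithinAt)
        (by rw [ContinuousWithinAt, hγbS]; exact hγblim)
        self_mem_nhdsWithin
      have h1 : Tendsto (fun s => vf (γ s)) (𝓝[<] S) (𝓝 (vf P)) :=
        (contDiff_vf.continuous.tendsto P).comp hγlim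
      apply h1.congr'
      filter_upwards [self_mem_nhdsWithin] with s hs
      exact ((hγbd s hs).deriv).symm
    -- local solution through the limit point
    obtain ⟨α, hα0, ε, hε, hαd⟩ := ContDiffAt.exists_forall_mem_closedBall_exists_eq_forall_mem_Ioo_hasDerivAt₀ (contDiff_vf.contDiffAt (x := P)) S
    set a : ℝ := S - min (ε/2) (1/2) with hadef
    have hmin1 : 0 < min (ε/2) (1/2) := lt_min (by linarith) (by norm_num)
    have haS : a < S := by simp only [hadef]; linarith
    have haε : S - ε < a := by
      simp only [hadef]
      have : min (ε/2) (1/2) ≤ ε/2 := min_le_left _ _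
      linarith
    have haS1 : S - 1 ≤ a := by
      simp only [hadef]
      have : min (ε/2) (1/2) ≤ 1/2 := min_le_right _ _
      linarith
    have hIccT : Icc a S ⊆ Ioo (S - ε) (S + ε) := fun t ht =>
      ⟨lt_of_lt_of_le haε ht.1, lt_of_le_of_lt ht.2 (by linarith)⟩
    have hαdIcc : ∀ t ∈ Icc a S, HasDerivAt α (vf (α t)) t := fun t ht => hαd t (hIccT ht)
    have hαcont : ContinuousOn α (Icc a S) := fun t ht =>
      (hαdIcc t ht).differentiableAt.continuousAt.continuousWithinAt
    -- a common ball
    set r₁ : ℝ := max A₁ A₂ with hr₁def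
    have hγnorm : ∀ t ∈ Ico a S, ‖γ t‖ ≤ r₁ := by
      intro t ht
      rw [Prod.norm_def]
      apply max_le
      · exact le_trans (habsf t (mem_Iio.mpr ht.2)) (le_max_left _ _)
      · exact le_trans (hf'bound t ⟨le_trans haS1 ht.1, ht.2⟩) (le_max_right _ _)
    have hPnorm : ‖P‖ ≤ r₁ := by
      apply le_of_tendsto hγlim.norm
      filter_upwards [Ioo_mem_nhdsLT_of_mem (show S ∈ Ioc a S from ⟨haS, le_refl S⟩)] with t ht
      exact hγnorm t ⟨ht.1.le, ht.2⟩
    obtain ⟨r₂, hr₂⟩ := isCompact_Icc.exists_bound_of_continuousOn hαcont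
    set r : ℝ := max (max r₁ r₂) 0 with hrdef
    have hr0 : 0 ≤ r := le_max_right _ _
    have hr₁r : r₁ ≤ r := le_trans (le_max_left _ _) (le_max_left _ _)
    have hr₂r : r₂ ≤ r := le_trans (le_max_right _ _) (le_max_left _ _)
    have hlip : ∀ t : ℝ, LipschitzOnWith (3 + 6*r + 3*r^2).toNNReal vf (Metric.closedBall 0 r) :=
      fun _ => lipschitzOnWith_vf hr0
    -- uniqueness of solutions on [a, S]
    have huniq : EqOn γb α (Icc a S) := by
      apply ODE_solution_unique_of_mem_Icc_left (v := fun _ => vf)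
        (s := fun _ => Metric.closedBall (0 : ℝ × ℝ) r) (fun t _ => hlip t)
      · -- continuity of γb on Icc a S
        intro t ht
        rcases lt_or_eq_of_le ht.2 with h | h
        · exact (hγbd t (mem_Iio.mpr h)).continuousAt.continuousWithinAt
        · subst h
          have hcw : ContinuousWithinAt γb (Iio t) t := by
            rw [ContinuousWithinAt, hγbS]; exact hγblim
          have := (continuousWithinAt_insert_self (s := Iio t)).mpr hcw
          apply this.mono
          intro x hx
          rcases lt_or_eq_of_le hx.2 with h' | h'
          · exact Or.inr h'
          · exact Or.inl h'
      · -- derivative of γb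
        intro t ht
        rcases lt_or_eq_of_le ht.2 with h | h
        · have := (hγbd t (mem_Iio.mpr h)).hasDerivWithinAt (s := Iic t)
          rwa [show vf (γ t) = vf (γb t) by rw [hγbEq (mem_Iio.mpr h)]] at this
        · subst h
          rwa [show vf (γb t) = vf P by rw [hγbS]]
      · -- γb stays in the ball
        intro t ht
        rw [Metric.mem_closedBall, dist_zero_right]
        rcases lt_or_eq_of_le ht.2 with h | h
        · rw [hγbEq (mem_Iio.mpr h)]
          exact le_trans (hγnorm t ⟨ht.1.le, h⟩) hr₁r
        · subst h
          rw [hγbS]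
          exact le_trans hPnorm hr₁r
      · exact hαcont
      · intro t ht
        exact (hαdIcc t ⟨ht.1.le, ht.2⟩).hasDerivWithinAt
      · intro t ht
        rw [Metric.mem_closedBall, dist_zero_right]
        exact le_trans (hr₂ t ⟨ht.1.le, ht.2⟩) hr₂r
      · rw [hγbS, hα0]
    have hfeq : ∀ t ∈ Ico a S, f t = (α t).1 := by
      intro t ht
      have h1 := huniq ⟨ht.1, ht.2.le⟩
      have h2 : γb t = γ t := hγbEq (mem_Iio.mpr ht.2)
      rw [h2] at h1
      exact congrArg Prod.fst h1
    -- construct the extension and contradict maximality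
    set S' : ℝ := S + ε/2 with hS'def
    have hSS' : S < S' := by simp only [hS'def]; linarith
    obtain ⟨hαC2, hαd1, hαd2⟩ := sol_facts (isOpen_Ioo (a := S - ε) (b := S + ε)) hαd
    set g : ℝ → ℝ := fun s => if s < S then f s else (α s).1 with hgdef
    have hgf : EqOn g f (Iio S) := fun s hs => by simp only [hgdef, if_pos (mem_Iio.mp hs)]
    have hgα : ∀ u ∈ Ioo a S', g u = (α u).1 := by
      intro u hu
      rcases lt_or_ge u S with h | h
      · simp only [hgdef, if_pos h]
        exact hfeq u ⟨hu.1.le, h⟩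
      · simp only [hgdef, if_neg (not_lt.mpr h)]
    have hsubT : Ioo a S' ⊆ Ioo (S - ε) (S + ε) := fun u hu =>
      ⟨lt_trans haε hu.1, lt_of_lt_of_le hu.2 (by simp only [hS'def]; linarith)⟩
    have hmemIoo : ∀ s : ℝ, S ≤ s → s ∈ Iio S' → s ∈ Ioo a S' := fun s h1 h2 =>
      ⟨lt_of_lt_of_le haS h1, h2⟩
    have hgC2 : ContDiffOn ℝ 2 g (Iio S') := by
      intro s hs
      apply ContDiffAt.contDiffWithinAt
      rcases lt_or_ge s S with h | h
      · have h1 : ContDiffAt ℝ 2 f s := hreg.contDiffAt (isOpen_Iio.mem_nhds h)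
        apply h1.congr_of_eventuallyEq
        exact Filter.eventuallyEq_iff_exists_mem.mpr ⟨Iio S, isOpen_Iio.mem_nhds h, hgf⟩
      · have hsmem := hmemIoo s h hs
        have h1 : ContDiffAt ℝ 2 (fun t => (α t).1) s :=
          hαC2.contDiffAt (isOpen_Ioo.mem_nhds (hsubT hsmem))
        apply h1.congr_of_eventuallyEq
        exact Filter.eventuallyEq_iff_exists_mem.mpr ⟨Ioo a S', isOpen_Ioo.mem_nhds hsmem, hgα⟩
    have hgode : ∀ s ∈ Iio S', deriv (deriv g) s - deriv g s
        = 2 * g s + 3 * g s ^ 2 + g s ^ 3 := by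
      intro s hs
      rcases lt_or_ge s S with h | h
      · have hev : g =ᶠ[𝓝 s] f :=
          Filter.eventuallyEq_iff_exists_mem.mpr ⟨Iio S, isOpen_Iio.mem_nhds h, hgf⟩
        rw [hev.deriv_eq, (hev.deriv).deriv_eq, hgf (mem_Iio.mpr h)]
        exact hode s (mem_Iio.mpr h)
      · have hsmem := hmemIoo s h hs
        have hsT := hsubT hsmem
        have hev : g =ᶠ[𝓝 s] (fun t => (α t).1) :=
          Filter.eventuallyEq_iff_exists_mem.mpr ⟨Ioo a S', isOpen_Ioo.mem_nhds hsmem, hgα⟩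
        rw [hev.deriv_eq, (hev.deriv).deriv_eq, hgα s hsmem, hαd1 s hsT, hαd2 s hsT]
        unfold Fcub
        ring
    exact hmax ⟨S', g, hSS', hgC2, hgf, hgode⟩
  refine ⟨partA, hBlow, ?_⟩
  -- Part C : crossing -1
  have h1 : ∀ᶠ s in 𝓝[<] S, f s < -1 := hBlow.eventually (eventually_lt_atBot (-1))
  obtain ⟨s₅, hs₅f, hs₅S⟩ := (h1.and self_mem_nhdsWithin).exists
  have h2 : ∀ᶠ t in atBot, -1 < f t := hf.eventually (eventually_gt_nhds (by norm_num))
  obtain ⟨s₄, hs₄f, hs₄le⟩ := (h2.and (eventually_le_atBot (s₅ - 1))).exists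
  have hsub : Icc s₄ s₅ ⊆ Iio S := fun x hx => lt_of_le_of_lt hx.2 hs₅S
  have hIVT := intermediate_value_Icc' (by linarith : s₄ ≤ s₅) (hcf.mono hsub)
  have hm : (-1 : ℝ) ∈ Icc (f s₅) (f s₄) := ⟨hs₅f.le, hs₄f.le⟩
  obtain ⟨s₀, hs₀mem, hs₀⟩ := hIVT hm
  exact ⟨s₀, lt_of_le_of_lt hs₀mem.2 hs₅S, hs₀⟩
end

section
/- Let 0≤C<1, let h, J be continuous on [0,∞) with h(ρ)→1 and J(ρ)/ρ→C as ρ→∞, and let f be twice differentiable on (0,∞) solving ρ²f''(ρ)=2f(ρ)+ρ²h(ρ)²(f(ρ)+1)+f(ρ)³+3f(ρ)²−J(ρ)²(f(ρ)+1). If f'(ρ)≤0 and −1<f(ρ)<0 for all ρ>0, then lim_{ρ→∞} f(ρ) = −1. -/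
open Real Set Filter Topology

set_option maxHeartbeats 1000000

/-- A bounded monotone trapped solution `f` of the transformed `F`-equation tends to `-1`
at infinity. -/
theorem f_limit_minus_one (C : ℝ) (hC0 : 0 ≤ C) (hC1 : C < 1) (h J f : ℝ → ℝ)
    (hhcont : ContinuousOn h (Ici 0)) (hJcont : ContinuousOn J (Ici 0))
    (hhlim : Tendsto h atTop (𝓝 1))
    (hJlim : Tendsto (fun ρ => J ρ / ρ) atTop (𝓝 C))
    (hfdiff : ∀ ρ ∈ Ioi (0:ℝ), DifferentiableAt ℝ f ρ ∧ DifferentiableAt ℝ (deriv f) ρ)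
    (hfode : ∀ ρ ∈ Ioi (0:ℝ), ρ ^ 2 * deriv (deriv f) ρ
      = 2 * f ρ + ρ ^ 2 * h ρ ^ 2 * (f ρ + 1) + f ρ ^ 3 + 3 * f ρ ^ 2
        - J ρ ^ 2 * (f ρ + 1))
    (hf' : ∀ ρ ∈ Ioi (0:ℝ), deriv f ρ ≤ 0)
    (hfrange : ∀ ρ ∈ Ioi (0:ℝ), -1 < f ρ ∧ f ρ < 0) :
    Tendsto f atTop (𝓝 (-1)) := by
  have hfd : ∀ ρ ∈ Ioi (0:ℝ), DifferentiableAt ℝ f ρ := fun ρ hρ => (hfdiff ρ hρ).1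
  have hfd' : ∀ ρ ∈ Ioi (0:ℝ), DifferentiableAt ℝ (deriv f) ρ := fun ρ hρ => (hfdiff ρ hρ).2
  have hanti : AntitoneOn f (Ici 1) := by
    apply antitoneOn_of_deriv_nonpos (convex_Ici 1)
    · exact fun ρ hρ =>
        ((hfd ρ (mem_Ioi.2 (lt_of_lt_of_le one_pos hρ))).continuousAt).continuousWithinAt
    · intro ρ hρ
      rw [interior_Ici] at hρ
      exact (hfd ρ (mem_Ioi.2 (lt_trans one_pos hρ))).differentiableWithinAt
    · intro ρ hρ
      rw [interior_Ici] at hρ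
      exact hf' ρ (mem_Ioi.2 (lt_trans one_pos hρ))
  have key : ∀ ε > (0:ℝ), ∃ ρ₀ ≥ (1:ℝ), f ρ₀ + 1 < ε := by
    intro ε hε
    by_contra hcon
    push_neg at hcon
    -- hcon : ∀ ρ₀ ≥ 1, ε ≤ f ρ₀ + 1
    have hC2 : C ^ 2 < 1 := by nlinarith
    set d : ℝ := (1 - C ^ 2) / 2 with hd
    have hdpos : 0 < d := by simp only [hd]; linarith
    set c : ℝ := ε * d / 2 with hc
    have hcpos : 0 < c := by positivity
    have hT : Tendsto (fun ρ => h ρ ^ 2 - (J ρ / ρ) ^ 2) atTop (𝓝 (1 - C ^ 2)) := by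
      have := (hhlim.pow 2).sub (hJlim.pow 2)
      simpa using this
    have hEv1 : ∀ᶠ ρ in atTop, d < h ρ ^ 2 - (J ρ / ρ) ^ 2 :=
      hT.eventually (eventually_gt_nhds (by simp only [hd]; linarith))
    have hEv2 : ∀ᶠ ρ in atTop, 3 / ρ ^ 2 < c := by
      have h0 : Tendsto (fun ρ : ℝ => 3 / ρ ^ 2) atTop (𝓝 0) := by
        have h1 : Tendsto (fun ρ : ℝ => ρ ^ 2) atTop atTop :=
          tendsto_pow_atTop two_ne_zero
        simpa [div_eq_mul_inv] using (h1.inv_tendsto_atTop.const_mul (3:ℝ))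
      exact h0.eventually (eventually_lt_nhds hcpos)
    obtain ⟨R₀, hR₀⟩ := eventually_atTop.1 (hEv1.and hEv2)
    set R : ℝ := max R₀ 1 with hR
    have hR1 : (1:ℝ) ≤ R := le_max_right _ _
    have hRpos : (0:ℝ) < R := lt_of_lt_of_le one_pos hR1
    -- second derivative bound
    have hfpp : ∀ ρ, R ≤ ρ → c ≤ deriv (deriv f) ρ := by
      intro ρ hρ
      have h1 : (1:ℝ) ≤ ρ := le_trans hR1 hρ
      have hρ0 : (0:ℝ) < ρ := lt_of_lt_of_le one_pos h1
      have hode := hfode ρ hρ0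
      obtain ⟨hA, hB⟩ := hR₀ ρ (le_trans (le_max_left _ _) hρ)
      obtain ⟨hfl, hfu⟩ := hfrange ρ hρ0
      have hfε : ε ≤ f ρ + 1 := hcon ρ h1
      have hρ2 : (0:ℝ) < ρ ^ 2 := by positivity
      have hJsq : J ρ ^ 2 = (J ρ / ρ) ^ 2 * ρ ^ 2 := by field_simp
      have hB' : 3 < c * ρ ^ 2 := (div_lt_iff₀ hρ2).1 hB
      -- product bound : d * ε ≤ (h² - (J/ρ)²) * (f+1)
      have hprod : d * ε ≤ (h ρ ^ 2 - (J ρ / ρ) ^ 2) * (f ρ + 1) :=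
        mul_le_mul hA.le hfε hε.le (le_trans hdpos.le hA.le)
      have hprod2 : ρ ^ 2 * (d * ε) ≤ ρ ^ 2 * ((h ρ ^ 2 - (J ρ / ρ) ^ 2) * (f ρ + 1)) :=
        mul_le_mul_of_nonneg_left hprod hρ2.le
      have hcube : -1 < f ρ ^ 3 := by nlinarith
      have e1 : ρ ^ 2 * deriv (deriv f) ρ
          = (2 * f ρ + f ρ ^ 3 + 3 * f ρ ^ 2)
            + ρ ^ 2 * ((h ρ ^ 2 - (J ρ / ρ) ^ 2) * (f ρ + 1)) := by
        rw [hode]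
        field_simp
        ring
      have e2 : -3 ≤ 2 * f ρ + f ρ ^ 3 + 3 * f ρ ^ 2 := by
        nlinarith [hcube, sq_nonneg (f ρ), hfl]
      have e3 : 2 * c * ρ ^ 2 = ρ ^ 2 * (d * ε) := by rw [hc]; ring
      have hbig : c * ρ ^ 2 ≤ deriv (deriv f) ρ * ρ ^ 2 := by
        nlinarith [e1, hprod2, e2, e3, hB']
      exact le_of_mul_le_mul_right hbig hρ2
    -- deriv f - c * ρ is monotone on [R, ∞)
    have hmono : MonotoneOn (fun ρ => deriv f ρ - c * ρ) (Ici R) := by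
      apply monotoneOn_of_deriv_nonneg (convex_Ici R)
      · intro ρ hρ
        have hρ0 : (0:ℝ) < ρ := lt_of_lt_of_le hRpos hρ
        exact ((hfd' ρ hρ0).continuousAt.sub ((continuous_const.mul continuous_id).continuousAt)).continuousWithinAt
      · intro ρ hρ
        rw [interior_Ici] at hρ
        have hρ0 : (0:ℝ) < ρ := lt_trans hRpos hρ
        exact ((hfd' ρ hρ0).sub (((hasDerivAt_id ρ).const_mul c).differentiableAt)).differentiableWithinAt
      · intro ρ hρ
        rw [interior_Ici] at hρ
        have hρ0 : (0:ℝ) < ρ := lt_trans hRpos hρ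
        have hD : HasDerivAt (fun ρ => deriv f ρ - c * ρ) (deriv (deriv f) ρ - c) ρ := by
          have h1 := (hfd' ρ hρ0).hasDerivAt
          have h2 : HasDerivAt (fun x : ℝ => c * x) c ρ := by
            simpa using (hasDerivAt_id ρ).const_mul c
          exact h1.sub h2
        rw [hD.deriv]
        linarith [hfpp ρ hρ.le]
    -- contradiction: deriv f must become positive
    have hdfR : deriv f R ≤ 0 := hf' R hRpos
    set ρ₁ : ℝ := R + (1 - deriv f R) / c with hρ₁def
    have hq : 0 < (1 - deriv f R) / c := div_pos (by linarith) hcpos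
    have hρ₁R : R ≤ ρ₁ := by simp only [hρ₁def]; linarith
    have hmr := hmono (self_mem_Ici) (mem_Ici.2 hρ₁R) hρ₁R
    have hceq : c * (ρ₁ - R) = 1 - deriv f R := by
      simp only [hρ₁def]
      field_simp
      ring
    have hρ₁pos : (0:ℝ) < ρ₁ := lt_of_lt_of_le hRpos hρ₁R
    have h0 := hf' ρ₁ hρ₁pos
    simp only at hmr
    nlinarith
  rw [Metric.tendsto_atTop]
  intro ε hε
  obtain ⟨ρ₀, hρ₀1, hρ₀⟩ := key ε hε
  refine ⟨ρ₀, fun ρ hρ => ?_⟩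
  have h1 : (1:ℝ) ≤ ρ := le_trans hρ₀1 hρ
  have hρpos : (0:ℝ) < ρ := lt_of_lt_of_le one_pos h1
  obtain ⟨hfl, hfu⟩ := hfrange ρ hρpos
  have hle : f ρ ≤ f ρ₀ := hanti (mem_Ici.2 hρ₀1) (mem_Ici.2 h1) hρ
  rw [Real.dist_eq, abs_lt]
  constructor <;> linarith
end

section
/- Let β>0, let F:[0,∞)→[0,1] be continuous with F(ρ)→0 as ρ→∞, and let h̃ be a twice differentiable solution on (0,∞) of ρ²h̃''+2ρh̃'=2F²h̃+(β²/2)h̃(h̃²−1)ρ² with h̃(0)=0 and h̃(ρ)>0 for ρ>0. If h̃ is bounded on [0,∞) and the function ρ↦ρh̃(ρ) has nonnegative derivative for all ρ>0, then lim_{ρ→∞} h̃(ρ) = 1. -/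
open Real Set Filter Topology

lemma mono_of_deriv {f : ℝ → ℝ} {a b : ℝ} (hab : a ≤ b)
    (hf : ∀ x ∈ Icc a b, DifferentiableAt ℝ f x)
    (h' : ∀ x ∈ Ioo a b, 0 ≤ deriv f x) : f a ≤ f b := by
  have := monotoneOn_of_deriv_nonneg (convex_Icc a b)
    (fun x hx => (hf x hx).continuousAt.continuousWithinAt)
    (fun x hx => (hf x (Ioo_subset_Icc_self (by rwa [interior_Icc] at hx))).differentiableWithinAt)
    (by rw [interior_Icc]; exact h')
  exact this (left_mem_Icc.2 hab) (right_mem_Icc.2 hab) hab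

lemma anti_of_deriv {f : ℝ → ℝ} {a b : ℝ} (hab : a ≤ b)
    (hf : ∀ x ∈ Icc a b, DifferentiableAt ℝ f x)
    (h' : ∀ x ∈ Ioo a b, deriv f x ≤ 0) : f b ≤ f a := by
  have := antitoneOn_of_deriv_nonpos (convex_Icc a b)
    (fun x hx => (hf x hx).continuousAt.continuousWithinAt)
    (fun x hx => (hf x (Ioo_subset_Icc_self (by rwa [interior_Icc] at hx))).differentiableWithinAt)
    (by rw [interior_Icc]; exact h')
  exact this (left_mem_Icc.2 hab) (right_mem_Icc.2 hab) hab

lemma aux_hasDerivH (htil : ℝ → ℝ) {x : ℝ} (h1 : DifferentiableAt ℝ htil x) :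
    HasDerivAt (fun y => y * htil y) (htil x + x * deriv htil x) x := by
  have := (hasDerivAt_id x).mul h1.hasDerivAt
  simpa [add_comm, Pi.mul_def] using this

lemma aux_derivH (htil : ℝ → ℝ) {x : ℝ} (h1 : DifferentiableAt ℝ htil x) :
    deriv (fun y => y * htil y) x = htil x + x * deriv htil x :=
  (aux_hasDerivH htil h1).deriv

lemma aux_derivH_ev (htil : ℝ → ℝ)
    (hdiff : ∀ ρ ∈ Ioi (0:ℝ), DifferentiableAt ℝ htil ρ ∧ DifferentiableAt ℝ (deriv htil) ρ)
    {x : ℝ} (hx : 0 < x) :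
    deriv (fun y => y * htil y) =ᶠ[𝓝 x] fun y => htil y + y * deriv htil y := by
  filter_upwards [isOpen_Ioi.mem_nhds (show x ∈ Ioi (0:ℝ) from hx)] with y hy
  exact aux_derivH htil (hdiff y hy).1

lemma aux_derivH2 (htil : ℝ → ℝ)
    (hdiff : ∀ ρ ∈ Ioi (0:ℝ), DifferentiableAt ℝ htil ρ ∧ DifferentiableAt ℝ (deriv htil) ρ)
    {x : ℝ} (hx : 0 < x) :
    DifferentiableAt ℝ (deriv (fun y => y * htil y)) x ∧
    deriv (deriv (fun y => y * htil y)) x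
      = 2 * deriv htil x + x * deriv (deriv htil) x := by
  have hev := aux_derivH_ev htil hdiff hx
  have h1 := (hdiff x hx).1
  have h2 := (hdiff x hx).2
  have hg : HasDerivAt (fun y => htil y + y * deriv htil y)
      (deriv htil x + (deriv htil x + x * deriv (deriv htil) x)) x :=
    h1.hasDerivAt.add (by simpa [add_comm, Pi.mul_def] using (hasDerivAt_id x).mul h2.hasDerivAt)
  constructor
  · exact (hg.differentiableAt.congr_of_eventuallyEq hev)
  · rw [hev.deriv_eq, hg.deriv]; ring

lemma mono_linear_shift {g : ℝ → ℝ} {a b κ : ℝ} (hab : a ≤ b)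
    (hg : ∀ x ∈ Icc a b, DifferentiableAt ℝ g x)
    (hd : ∀ x ∈ Ioo a b, κ ≤ deriv g x) :
    g a + κ * (b - a) ≤ g b := by
  have hlin : ∀ x : ℝ, HasDerivAt (fun y : ℝ => κ * y) κ x := by
    intro x; simpa using (hasDerivAt_id x).const_mul κ
  have key := mono_of_deriv (f := fun x => g x - κ * x) hab
    (fun x hx => (hg x hx).sub (hlin x).differentiableAt)
    (fun x hx => by
      have hD := (hg x (Ioo_subset_Icc_self hx)).hasDerivAt.sub (hlin x)
      rw [show deriv (fun x => g x - κ * x) x = deriv g x - κ from hD.deriv]; linarith [hd x hx])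
  linarith [key]

lemma anti_linear_shift {g : ℝ → ℝ} {a b κ : ℝ} (hab : a ≤ b)
    (hg : ∀ x ∈ Icc a b, DifferentiableAt ℝ g x)
    (hd : ∀ x ∈ Ioo a b, deriv g x ≤ -κ) :
    g b + κ * (b - a) ≤ g a := by
  have hlin : ∀ x : ℝ, HasDerivAt (fun y : ℝ => κ * y) κ x := by
    intro x; simpa using (hasDerivAt_id x).const_mul κ
  have key := anti_of_deriv (f := fun x => g x + κ * x) hab
    (fun x hx => (hg x hx).add (hlin x).differentiableAt)
    (fun x hx => by
      have hD := (hg x (Ioo_subset_Icc_self hx)).hasDerivAt.add (hlin x)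
      rw [show deriv (fun x => g x + κ * x) x = deriv g x + κ from hD.deriv]; linarith [hd x hx])
  linarith [key]

lemma quad_shift {g : ℝ → ℝ} {a b κ : ℝ} (hab : a ≤ b)
    (hg : ∀ x ∈ Icc a b, DifferentiableAt ℝ g x)
    (hd : ∀ x ∈ Ioo a b, κ * (b - x) ≤ deriv g x) :
    g a + κ / 2 * (b - a) ^ 2 ≤ g b := by
  have hq : ∀ x : ℝ, HasDerivAt (fun y => κ / 2 * (b - y) ^ 2) (-(κ * (b - x))) x := by
    intro x
    have h1 : HasDerivAt (fun y : ℝ => b - y) (-1) x := (hasDerivAt_id x).const_sub b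
    have h2 := (h1.pow 2).const_mul (κ / 2)
    exact h2.congr_deriv (by norm_num; ring)
  have key := mono_of_deriv (f := fun x => g x + κ / 2 * (b - x) ^ 2) hab
    (fun x hx => (hg x hx).add (hq x).differentiableAt)
    (fun x hx => by
      have hD := (hg x (Ioo_subset_Icc_self hx)).hasDerivAt.add (hq x)
      rw [show deriv (fun x => g x + κ / 2 * (b - x) ^ 2) x = deriv g x + -(κ * (b - x)) from hD.deriv]; linarith [hd x hx])
  have hbb : (b - b) ^ 2 = 0 := by ring
  nlinarith [key]


set_option maxHeartbeats 2000000 in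
/-- A bounded positive solution `h̃` of the `h`-equation with `(ρh̃(ρ))' ≥ 0` tends to `1`
at infinity. -/
theorem h_limit_one (β : ℝ) (hβ : 0 < β) (F htil : ℝ → ℝ)
    (hFcont : ContinuousOn F (Ici 0))
    (hFrange : ∀ ρ ∈ Ici (0:ℝ), 0 ≤ F ρ ∧ F ρ ≤ 1)
    (hFlim : Tendsto F atTop (𝓝 0))
    (hdiff : ∀ ρ ∈ Ioi (0:ℝ), DifferentiableAt ℝ htil ρ ∧
      DifferentiableAt ℝ (deriv htil) ρ)
    (hode : ∀ ρ ∈ Ioi (0:ℝ), ρ ^ 2 * deriv (deriv htil) ρ + 2 * ρ * deriv htil ρ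
      = 2 * F ρ ^ 2 * htil ρ + (β ^ 2 / 2) * htil ρ * (htil ρ ^ 2 - 1) * ρ ^ 2)
    (h0 : htil 0 = 0)
    (hpos : ∀ ρ ∈ Ioi (0:ℝ), 0 < htil ρ)
    (hbdd : ∃ M : ℝ, ∀ ρ ∈ Ici (0:ℝ), |htil ρ| ≤ M)
    (hH' : ∀ ρ ∈ Ioi (0:ℝ), 0 ≤ deriv (fun x => x * htil x) ρ) :
    Tendsto htil atTop (𝓝 1) := by
  obtain ⟨M, hM⟩ := hbdd
  have hM0 : 0 ≤ M := le_trans (abs_nonneg _) (hM 0 self_mem_Ici)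
  have hMb : ∀ ρ, 0 ≤ ρ → htil ρ ≤ M := fun ρ hρ => (abs_le.1 (hM ρ hρ)).2
  set H : ℝ → ℝ := fun y => y * htil y with hHdef
  have hHval : ∀ x, H x = x * htil x := fun x => rfl
  have hβ2 : (0:ℝ) < β ^ 2 := pow_pos hβ 2
  have hH'0 : ∀ ρ, 0 < ρ → 0 ≤ deriv H ρ := fun ρ hρ => hH' ρ (mem_Ioi.mpr hρ)
  have hHd : ∀ x, 0 < x → DifferentiableAt ℝ H x := by
    intro x hx
    have := (aux_hasDerivH htil (hdiff x (mem_Ioi.mpr hx)).1).differentiableAt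
    rwa [← hHdef] at this
  have hH'd : ∀ x, 0 < x → DifferentiableAt ℝ (deriv H) x := by
    intro x hx
    have := (aux_derivH2 htil hdiff hx).1
    rwa [← hHdef] at this
  have hH2 : ∀ x, 0 < x → deriv (deriv H) x
      = 2 * F x ^ 2 * htil x / x + β ^ 2 / 2 * (x * htil x) * (htil x ^ 2 - 1) := by
    intro x hx
    have e1 := (aux_derivH2 htil hdiff hx).2
    rw [← hHdef] at e1
    have e2 := hode x (mem_Ioi.mpr hx)
    have hx0 : x ≠ 0 := ne_of_gt hx
    rw [e1]
    have key : (2 * deriv htil x + x * deriv (deriv htil) x) * x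
        = (2 * F x ^ 2 * htil x / x + β ^ 2 / 2 * (x * htil x) * (htil x ^ 2 - 1)) * x := by
      rw [add_mul, add_mul, div_mul_cancel₀ _ hx0]
      linear_combination e2
    exact mul_right_cancel₀ hx0 key
  have Hmono : ∀ x y, 0 < x → x ≤ y → H x ≤ H y := by
    intro x y hx hxy
    exact mono_of_deriv hxy (fun z hz => hHd z (lt_of_lt_of_le hx hz.1))
      (fun z hz => hH'0 z (lt_trans hx hz.1))
  have hHnn : ∀ x, 0 ≤ x → 0 ≤ H x := by
    intro x hx
    rcases eq_or_lt_of_le hx with h | h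
    · rw [hHval, ← h]; simp
    · rw [hHval]; exact mul_nonneg h.le (hpos x (mem_Ioi.mpr h)).le
  have hnnaux : ∀ ρ, 0 < ρ → 1 ≤ htil ρ → 0 ≤ deriv (deriv H) ρ := by
    intro ρ hρ0 h1
    rw [hH2 ρ hρ0]
    have hpρ := hpos ρ (mem_Ioi.mpr hρ0)
    have hFnn : 0 ≤ 2 * F ρ ^ 2 * htil ρ / ρ :=
      div_nonneg (by nlinarith [sq_nonneg (F ρ)]) hρ0.le
    have hX : 0 ≤ β ^ 2 / 2 * (ρ * htil ρ) * (htil ρ ^ 2 - 1) :=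
      mul_nonneg (mul_nonneg (by positivity) (mul_nonneg hρ0.le hpρ.le)) (by nlinarith)
    linarith
  -- Claim U: eventually htil ρ < 1 + δ
  have claimU : ∀ δ : ℝ, 0 < δ → δ ≤ 1 → ∀ᶠ ρ in atTop, htil ρ < 1 + δ := by
    intro δ hδ hδ1
    obtain ⟨c, hc0, hceq⟩ : ∃ c : ℝ, 0 < c ∧ (1 + δ / 2) * c = δ / 2 :=
      ⟨δ / 2 / (1 + δ / 2), div_pos (by linarith) (by linarith),
        by field_simp⟩
    have hK : 0 < β ^ 2 / 2 * δ * c := mul_pos (mul_pos (by linarith) hδ) hc0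
    obtain ⟨R, hR1, hKR⟩ : ∃ R : ℝ, 1 ≤ R ∧ 2 * M + 2 < β ^ 2 / 2 * δ * c * R := by
      refine ⟨(2 * M + 3) / (β ^ 2 / 2 * δ * c) + 1, ?_, ?_⟩
      · have : 0 ≤ (2 * M + 3) / (β ^ 2 / 2 * δ * c) := div_nonneg (by linarith) hK.le
        linarith
      · have h1 : β ^ 2 / 2 * δ * c * ((2 * M + 3) / (β ^ 2 / 2 * δ * c)) = 2 * M + 3 := by
          field_simp
        nlinarith [hK, h1]
    filter_upwards [eventually_ge_atTop R] with ρ₁ hρ₁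
    by_contra hcon
    push_neg at hcon
    have hρ₁0 : 0 < ρ₁ := lt_of_lt_of_le (by linarith) hρ₁
    have hρ₁1 : 1 ≤ ρ₁ := hR1.trans hρ₁
    obtain ⟨b, hb1, hbρ⟩ : ∃ b : ℝ, ρ₁ < b ∧ (1 + δ / 2) * b = ρ₁ * (1 + δ) := by
      refine ⟨ρ₁ * (1 + δ) / (1 + δ / 2), ?_, by field_simp⟩
      rw [lt_div_iff₀ (by linarith)]
      nlinarith
    have hb0 : 0 < b := lt_trans hρ₁0 hb1
    have hbc2 : b - ρ₁ = ρ₁ * c := by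
      have hbc : (1 + δ / 2) * (b - ρ₁) = (1 + δ / 2) * (ρ₁ * c) := by
        linear_combination hbρ - ρ₁ * hceq
      exact mul_left_cancel₀ (by linarith : (0:ℝ) < 1 + δ / 2).ne' hbc
    have hHρ₁ : ρ₁ * (1 + δ) ≤ ρ₁ * htil ρ₁ := by nlinarith [hρ₁0, hcon]
    have fact2 : ∀ ρ, ρ₁ ≤ ρ → ρ ≤ b → 1 + δ / 2 ≤ htil ρ := by
      intro ρ h1 h2
      have hρ0 : 0 < ρ := lt_of_lt_of_le hρ₁0 h1
      have hm : H ρ₁ ≤ H ρ := Hmono ρ₁ ρ hρ₁0 h1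
      rw [hHval, hHval] at hm
      have l1 : (1 + δ / 2) * ρ ≤ (1 + δ / 2) * b :=
        mul_le_mul_of_nonneg_left h2 (by linarith)
      have h3 : (1 + δ / 2) * ρ ≤ ρ * htil ρ := by linarith [l1, hbρ, hHρ₁, hm]
      nlinarith [h3, hρ0]
    obtain ⟨κ, hκpos, hκeq⟩ : ∃ κ : ℝ, 0 < κ ∧ κ = β ^ 2 / 2 * δ * ρ₁ :=
      ⟨_, mul_pos (mul_pos (by linarith) hδ) hρ₁0, rfl⟩
    have fact3 : ∀ ρ ∈ Ioo ρ₁ b, κ ≤ deriv (deriv H) ρ := by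
      intro ρ hρ
      have hρ0 : 0 < ρ := lt_trans hρ₁0 hρ.1
      have h1 := fact2 ρ hρ.1.le hρ.2.le
      have hpρ := hpos ρ (mem_Ioi.mpr hρ0)
      rw [hH2 ρ hρ0, hκeq]
      have hFnn : 0 ≤ 2 * F ρ ^ 2 * htil ρ / ρ :=
        div_nonneg (by nlinarith [sq_nonneg (F ρ)]) hρ0.le
      have e1 : (1:ℝ) + δ ≤ htil ρ ^ 2 := by nlinarith
      have e2 : ρ₁ * (1 + δ) ≤ ρ * htil ρ := by
        have hm : H ρ₁ ≤ H ρ := Hmono ρ₁ ρ hρ₁0 hρ.1.le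
        rw [hHval, hHval] at hm
        linarith [hHρ₁, hm]
      have h4 : ρ₁ * (1 + δ) * δ ≤ ρ * htil ρ * (htil ρ ^ 2 - 1) :=
        mul_le_mul e2 (by linarith) hδ.le (by nlinarith [hρ0, hpρ])
      have e3 : ρ₁ * δ ≤ ρ * htil ρ * (htil ρ ^ 2 - 1) := by
        nlinarith [h4, mul_nonneg (mul_nonneg hρ₁0.le hδ.le) hδ.le]
      have h5 : β ^ 2 / 2 * (ρ₁ * δ) ≤ β ^ 2 / 2 * (ρ * htil ρ * (htil ρ ^ 2 - 1)) :=
        mul_le_mul_of_nonneg_left e3 (by positivity)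
      nlinarith [hFnn, h5]
    have fact4 : deriv H ρ₁ + κ * (b - ρ₁) ≤ deriv H b :=
      mono_linear_shift hb1.le (fun x hx => hH'd x (lt_of_lt_of_le hρ₁0 hx.1)) fact3
    have hA : 2 * M + 2 < deriv H b := by
      have h0 : 0 ≤ deriv H ρ₁ := hH'0 ρ₁ hρ₁0
      have hq : κ * (b - ρ₁) = β ^ 2 / 2 * δ * c * ρ₁ ^ 2 := by
        rw [hκeq, hbc2]; ring
      have hRρ : R ≤ ρ₁ ^ 2 := by nlinarith [hρ₁, hρ₁1]
      have hq2 : β ^ 2 / 2 * δ * c * R ≤ β ^ 2 / 2 * δ * c * ρ₁ ^ 2 :=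
        mul_le_mul_of_nonneg_left hRρ hK.le
      linarith [fact4, h0, hKR, hq, hq2]
    have fact5 : ∀ ρ, b ≤ ρ → 1 ≤ htil ρ := by
      by_contra hScon
      push_neg at hScon
      obtain ⟨w, hwb, hw1⟩ := hScon
      have hSne : Set.Nonempty {ρ : ℝ | b ≤ ρ ∧ htil ρ < 1} := ⟨w, hwb, hw1⟩
      have hSbdd : BddBelow {ρ : ℝ | b ≤ ρ ∧ htil ρ < 1} := ⟨b, fun x hx => hx.1⟩
      set t := sInf {ρ : ℝ | b ≤ ρ ∧ htil ρ < 1} with htdef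
      have htb : b ≤ t := le_csInf hSne (fun x hx => hx.1)
      have ht0 : 0 < t := lt_of_lt_of_le hb0 htb
      have ht1 : htil t ≤ 1 := by
        obtain ⟨u, hu, hulim⟩ := mem_closure_iff_seq_limit.1 (csInf_mem_closure hSne hSbdd)
        exact le_of_tendsto
          (((hdiff t (mem_Ioi.mpr ht0)).1.continuousAt).tendsto.comp hulim)
          (Eventually.of_forall fun n => (hu n).2.le)
      have hIco : ∀ ρ, b ≤ ρ → ρ < t → 1 ≤ htil ρ := by
        intro ρ h1 h2
        by_contra h3
        push_neg at h3
        exact absurd (csInf_le hSbdd ⟨h1, h3⟩) (not_le.2 h2)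
      have hH'ge : ∀ ρ ∈ Ioo b t, 2 * M + 2 ≤ deriv H ρ := by
        intro ρ hρ
        have h6 := mono_of_deriv (f := deriv H) hρ.1.le
          (fun y hy => hH'd y (lt_of_lt_of_le hb0 hy.1))
          (fun y hy => hnnaux y (lt_trans hb0 hy.1)
            (hIco y hy.1.le (lt_trans hy.2 hρ.2)))
        linarith [hA]
      have hHt : H b + (2 * M + 2) * (t - b) ≤ H t :=
        mono_linear_shift htb (fun x hx => hHd x (lt_of_lt_of_le hb0 hx.1)) hH'ge
      rw [hHval, hHval] at hHt
      have h5 : t * htil t ≤ t := by nlinarith [ht1, ht0]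
      have h6 : b * (1 + δ / 2) ≤ b * htil b := by
        nlinarith [fact2 b hb1.le le_rfl, hb0]
      nlinarith [hHt, h5, h6, hM0, htb, hb0, hδ,
        mul_nonneg hM0 (sub_nonneg.2 htb)]
    have hstep : H b + (2 * M + 2) * (2 * b - b) ≤ H (2 * b) := by
      apply mono_linear_shift (by linarith) (fun x hx => hHd x (lt_of_lt_of_le hb0 hx.1))
      intro x hx
      have h6 := mono_of_deriv (f := deriv H) hx.1.le
        (fun y hy => hH'd y (lt_of_lt_of_le hb0 hy.1))
        (fun y hy => hnnaux y (lt_trans hb0 hy.1) (fact5 y hy.1.le))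
      linarith [hA]
    rw [hHval, hHval] at hstep
    have h7 : 2 * b * htil (2 * b) ≤ 2 * b * M := by
      nlinarith [hMb (2 * b) (by linarith), hb0]
    have h8 : 0 ≤ b * htil b := by
      have := hHnn b hb0.le; rwa [hHval] at this
    nlinarith [hstep, h7, h8, hb0]
  -- Claim L: eventually 1 - δ < htil ρ
  have claimL : ∀ δ : ℝ, 0 < δ → δ ≤ 1 / 2 → ∀ᶠ ρ in atTop, 1 - δ < htil ρ := by
    intro δ hδ hδ1
    have hc₀ : 0 < htil 1 := hpos 1 (mem_Ioi.mpr one_pos)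
    have hHge : ∀ ρ, 1 ≤ ρ → htil 1 ≤ ρ * htil ρ := by
      intro ρ h
      have hm := Hmono 1 ρ one_pos h
      rw [hHval, hHval] at hm
      linarith [hm]
    obtain ⟨κ, hκ, hκeq⟩ : ∃ κ : ℝ, 0 < κ ∧ κ = β ^ 2 / 2 * htil 1 * (δ / 2) :=
      ⟨_, mul_pos (mul_pos (by linarith) hc₀) (by linarith), rfl⟩
    have hM1 : 0 < M := lt_of_lt_of_le hc₀ (hMb 1 one_pos.le)
    have hR₁1 : (1:ℝ) ≤ max 1 (4 * M / κ) := le_max_left _ _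
    have hR₁M : 4 * M / κ ≤ max 1 (4 * M / κ) := le_max_right _ _
    have hkey : ∀ ρ, max 1 (4 * M / κ) ≤ ρ → htil ρ ≤ 1 - δ / 2 →
        deriv (deriv H) ρ ≤ -(κ / 2) := by
      intro ρ hρR hρh
      have hρ1 : (1:ℝ) ≤ ρ := le_trans hR₁1 hρR
      have hρ0 : 0 < ρ := by linarith
      rw [hH2 ρ hρ0]
      have hpρ := hpos ρ (mem_Ioi.mpr hρ0)
      have hFb := hFrange ρ hρ0.le
      have hMρ := hMb ρ hρ0.le
      have h4 : 4 * M ≤ ρ * κ := by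
        have h5 := mul_le_mul_of_nonneg_right (le_trans hR₁M hρR) hκ.le
        rwa [div_mul_cancel₀ _ (ne_of_gt hκ)] at h5
      have term1 : 2 * F ρ ^ 2 * htil ρ / ρ ≤ κ / 2 := by
        rw [div_le_iff₀ hρ0]
        have hF1 : F ρ ^ 2 ≤ 1 := by nlinarith [hFb.1, hFb.2]
        have h1 : 2 * F ρ ^ 2 * htil ρ ≤ 2 * M := by
          nlinarith [hF1, hpρ.le, hMρ, mul_nonneg (sub_nonneg.2 hF1) hpρ.le]
        nlinarith [h1, h4]
      have term2 : β ^ 2 / 2 * (ρ * htil ρ) * (htil ρ ^ 2 - 1) ≤ -κ := by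
        have h1 : htil 1 ≤ ρ * htil ρ := hHge ρ hρ1
        have h2 : htil ρ ^ 2 - 1 ≤ -(δ / 2) := by nlinarith [hρh, hpρ.le, hδ, hδ1]
        have h3 : ρ * htil ρ * (htil ρ ^ 2 - 1) ≤ htil 1 * (htil ρ ^ 2 - 1) :=
          mul_le_mul_of_nonpos_right h1 (by linarith)
        have h6 : htil 1 * (htil ρ ^ 2 - 1) ≤ htil 1 * (-(δ / 2)) :=
          mul_le_mul_of_nonneg_left h2 hc₀.le
        have h7 := mul_le_mul_of_nonneg_left (h3.trans h6)
          (by positivity : (0:ℝ) ≤ β ^ 2 / 2)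
        rw [hκeq]
        nlinarith [h7]
      linarith
    filter_upwards [eventually_ge_atTop
      (max (max 1 (4 * M / κ) * (1 - δ / 2) / (1 - δ)) (16 * M / (κ * δ ^ 2) + 1))]
      with ρ₂ hρ₂
    by_contra hcon
    push_neg at hcon
    have hd1 : (0:ℝ) < 1 - δ := by linarith
    have hd2 : (0:ℝ) < 1 - δ / 2 := by linarith
    have hρ₂R1 : max 1 (4 * M / κ) * (1 - δ / 2) / (1 - δ) ≤ ρ₂ :=
      le_trans (le_max_left _ _) hρ₂
    have hρ₂R2 : 16 * M / (κ * δ ^ 2) + 1 ≤ ρ₂ := le_trans (le_max_right _ _) hρ₂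
    have hρ₂0 : 0 < ρ₂ := by
      have h1 : (0:ℝ) < max 1 (4 * M / κ) * (1 - δ / 2) / (1 - δ) :=
        div_pos (mul_pos (by linarith) hd2) hd1
      linarith
    obtain ⟨a, ha0, haa⟩ : ∃ a : ℝ, 0 < a ∧ (1 - δ / 2) * a = ρ₂ * (1 - δ) :=
      ⟨ρ₂ * (1 - δ) / (1 - δ / 2), div_pos (mul_pos hρ₂0 hd1) hd2,
        by rw [mul_comm, div_mul_cancel₀ _ (ne_of_gt hd2)]⟩
    have haρ : a < ρ₂ := by nlinarith [haa, hρ₂0, hd2, hδ]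
    have haR₁ : max 1 (4 * M / κ) ≤ a := by
      rw [div_le_iff₀ hd1] at hρ₂R1
      nlinarith [haa, hd2, hρ₂R1]
    have hsmall : ∀ ρ, a ≤ ρ → ρ ≤ ρ₂ → htil ρ ≤ 1 - δ / 2 := by
      intro ρ h1 h2
      have hρ0 : 0 < ρ := lt_of_lt_of_le ha0 h1
      have hm : H ρ ≤ H ρ₂ := Hmono ρ ρ₂ hρ0 h2
      rw [hHval, hHval] at hm
      have e1 : ρ₂ * htil ρ₂ ≤ ρ₂ * (1 - δ) := by nlinarith [hρ₂0, hcon]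
      nlinarith [haa, hm, e1, hρ0, h1, hd2]
    have hd2' : ∀ ρ ∈ Ioo a ρ₂, deriv (deriv H) ρ ≤ -(κ / 2) := fun ρ hρ =>
      hkey ρ (le_trans haR₁ hρ.1.le) (hsmall ρ hρ.1.le hρ.2.le)
    have hH'low : ∀ ρ ∈ Ioo a ρ₂, κ / 2 * (ρ₂ - ρ) ≤ deriv H ρ := by
      intro ρ hρ
      have hρ0 : 0 < ρ := lt_of_lt_of_le ha0 hρ.1.le
      have key := anti_linear_shift (κ := κ / 2) hρ.2.le
        (fun x hx => hH'd x (lt_of_lt_of_le hρ0 hx.1))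
        (fun x hx => hd2' x ⟨lt_trans hρ.1 hx.1, hx.2⟩)
      have h0 := hH'0 ρ₂ hρ₂0
      linarith
    have hquad : H a + κ / 2 / 2 * (ρ₂ - a) ^ 2 ≤ H ρ₂ :=
      quad_shift haρ.le (fun x hx => hHd x (lt_of_lt_of_le ha0 hx.1)) hH'low
    rw [hHval, hHval] at hquad
    have h7 : ρ₂ * htil ρ₂ ≤ M * ρ₂ := by nlinarith [hMb ρ₂ hρ₂0.le, hρ₂0]
    have h8 : 0 ≤ a * htil a := by
      have := hHnn a ha0.le; rwa [hHval] at this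
    have h9 : ρ₂ * δ / 2 ≤ ρ₂ - a := by nlinarith [haa, haρ.le, hδ]
    have h10 : κ / 4 * (ρ₂ * δ / 2) ^ 2 ≤ M * ρ₂ := by
      have hp : (ρ₂ * δ / 2) ^ 2 ≤ (ρ₂ - a) ^ 2 :=
        pow_le_pow_left₀ (by nlinarith [hρ₂0, hδ]) h9 2
      nlinarith [hquad, h7, h8, hp, hκ]
    have h11 : κ * δ ^ 2 * ρ₂ ≤ 16 * M := by nlinarith [h10, hρ₂0]
    have h12 : 16 * M / (κ * δ ^ 2) < ρ₂ := by linarith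
    rw [div_lt_iff₀ (mul_pos hκ (pow_pos hδ 2))] at h12
    nlinarith [h11, h12]
  -- Conclusion
  rw [Metric.tendsto_atTop]
  intro ε hε
  have hδ0 : 0 < min (ε / 2) (1 / 2) := lt_min (by linarith) (by norm_num)
  have hδ1 : min (ε / 2) (1 / 2) ≤ 1 / 2 := min_le_right _ _
  have hδε : min (ε / 2) (1 / 2) < ε := lt_of_le_of_lt (min_le_left _ _) (by linarith)
  obtain ⟨N₁, h₁⟩ := eventually_atTop.1 (claimU _ hδ0 (by linarith))
  obtain ⟨N₂, h₂⟩ := eventually_atTop.1 (claimL _ hδ0 hδ1)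
  refine ⟨max N₁ N₂, fun ρ hρ => ?_⟩
  have e1 := h₁ ρ (le_trans (le_max_left _ _) hρ)
  have e2 := h₂ ρ (le_trans (le_max_right _ _) hρ)
  rw [Real.dist_eq, abs_lt]
  constructor <;> linarith
end
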